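/- arXiv:2402.11387 — 7 statements merged into one kernel-verified Lean document; each statement's English description precedes it below -/
import Mathlib

section
/- Let H be a graph with at least one edge, and let k0 denote the minimum over all edges uv of H of max{d_H(u), d_H(v)} − 1. Then in any H-saturated graph G, the set of vertices of G whose degree is strictly less than k0 forms a clique (every two distinct such vertices are adjacent in G). -/
open SimpleGraph

/-- `G` contains a subgraph isomorphic to `H`. -/
def ContainsCopy {α β : Type*} (G : SimpleGraph α) (H : SimpleGraph β) : Prop :=
  ∃ f : β → α, Function.Injective f ∧ ∀ ⦃u v : β⦄, H.Adj u v → G.Adj (f u) (f v)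

/-- `G` is `H`-saturated: `G` is `H`-free but adding any edge creates a copy of `H`. -/
def IsSat {α β : Type*} (G : SimpleGraph α) (H : SimpleGraph β) : Prop :=
  ¬ ContainsCopy G H ∧
    ∀ x y : α, x ≠ y → ¬ G.Adj x y →
      ContainsCopy (G ⊔ SimpleGraph.fromEdgeSet {s(x, y)}) H

/-- The degree of a vertex. -/
noncomputable def deg {α : Type*} (G : SimpleGraph α) (v : α) : ℕ :=
  (G.neighborSet v).ncard

/-- `wt0 uv = max (d u) (d v) - 1`. -/
noncomputable def wt0 {β : Type*} (H : SimpleGraph β) (u v : β) : ℕ :=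
  max (deg H u) (deg H v) - 1

/-- The neighborhood of the edge `uv`: `(N(u) - v) ∪ (N(v) - u)`. -/
def edgeNbhd {β : Type*} (H : SimpleGraph β) (u v : β) : Set β :=
  (H.neighborSet u \ {v}) ∪ (H.neighborSet v \ {u})

/-- `wt1 uv`: the maximum degree of a vertex in the neighborhood of the edge `uv`. -/
noncomputable def wt1 {β : Type*} (H : SimpleGraph β) (u v : β) : ℕ :=
  sSup (deg H '' edgeNbhd H u v)

/-- `k0`: the minimum of `wt0` over the edges of `H`. -/
noncomputable def paramK0 {β : Type*} (H : SimpleGraph β) : ℕ :=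
  sInf {k | ∃ u v, H.Adj u v ∧ wt0 H u v = k}

/-- `k1`: the minimum of `wt1` over the edges of `H`. -/
noncomputable def paramK1 {β : Type*} (H : SimpleGraph β) : ℕ :=
  sInf {k | ∃ u v, H.Adj u v ∧ wt1 H u v = k}

/-- `k1'`: the minimum of `wt1` over the edges of `H` minimizing `wt0`. -/
noncomputable def paramK1p {β : Type*} (H : SimpleGraph β) : ℕ :=
  sInf {k | ∃ u v, H.Adj u v ∧ wt0 H u v = paramK0 H ∧ wt1 H u v = k}

/-- `k0'`: the minimum of `wt0` over the edges of `H` minimizing `wt1`. -/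
noncomputable def paramK0p {β : Type*} (H : SimpleGraph β) : ℕ :=
  sInf {k | ∃ u v, H.Adj u v ∧ wt1 H u v = paramK1 H ∧ wt0 H u v = k}


lemma deg_le_of_copy {α β : Type*} [Fintype α] [Fintype β] {G : SimpleGraph α}
    {H : SimpleGraph β} {f : β → α} (hf : Function.Injective f)
    (hmap : ∀ ⦃u v : β⦄, H.Adj u v → G.Adj (f u) (f v)) (u : β) :
    deg H u ≤ deg G (f u) := by
  have hsub : f '' H.neighborSet u ⊆ G.neighborSet (f u) := by
    rintro _ ⟨w, hw, rfl⟩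
    exact hmap hw
  calc deg H u = (f '' H.neighborSet u).ncard :=
        (Set.ncard_image_of_injective _ hf).symm
    _ ≤ deg G (f u) := Set.ncard_le_ncard hsub (Set.toFinite _)

lemma deg_sup_single {α : Type*} [Fintype α] (G : SimpleGraph α) {x y : α}
    (hxy : x ≠ y) (h : ¬ G.Adj x y) :
    deg (G ⊔ SimpleGraph.fromEdgeSet {s(x, y)}) x = deg G x + 1 := by
  have hns : (G ⊔ SimpleGraph.fromEdgeSet {s(x, y)}).neighborSet x
      = insert y (G.neighborSet x) := by
    ext z
    simp only [SimpleGraph.mem_neighborSet, SimpleGraph.sup_adj,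
      SimpleGraph.fromEdgeSet_adj, Set.mem_singleton_iff, Sym2.eq_iff,
      Set.mem_insert_iff]
    constructor
    · rintro (hz | ⟨(⟨-, rfl⟩ | ⟨rfl, rfl⟩), hne⟩)
      · exact Or.inr hz
      · exact Or.inl rfl
      · exact absurd rfl hne
    · rintro (rfl | hz)
      · exact Or.inr ⟨Or.inl ⟨trivial, rfl⟩, hxy⟩
      · exact Or.inl hz
  unfold deg
  rw [hns, Set.ncard_insert_of_notMem (by simpa using h) (Set.toFinite _)]

/-- Prop. (low degree clique): in an `H`-saturated graph, the vertices of degree `< k0`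
form a clique. -/
theorem stmt0 {α β : Type*} [Fintype α] [Fintype β] (H : SimpleGraph β)
    (hedge : ∃ u v, H.Adj u v)
    (G : SimpleGraph α) (hG : IsSat G H) :
    ∀ x y : α, deg G x < paramK0 H → deg G y < paramK0 H → x ≠ y → G.Adj x y := by
  intro x y hx hy hxy
  by_contra hadj
  obtain ⟨f, hf, hmap⟩ := hG.2 x y hxy hadj
  have main : ∀ u v : β, H.Adj u v → f u = x → f v = y → False := by
    intro u v huv hu hv
    have hdu : deg H u ≤ deg G x + 1 := by
      have := deg_le_of_copy hf hmap u
      rw [hu, deg_sup_single G hxy hadj] at this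
      exact this
    have hdv : deg H v ≤ deg G y + 1 := by
      have := deg_le_of_copy hf hmap v
      rw [hv] at this
      have hswap : (G ⊔ SimpleGraph.fromEdgeSet {s(x, y)})
          = (G ⊔ SimpleGraph.fromEdgeSet {s(y, x)}) := by
        rw [Sym2.eq_swap]
      rw [hswap, deg_sup_single G hxy.symm (fun hh => hadj hh.symm)] at this
      exact this
    have hk0 : paramK0 H ≤ wt0 H u v := Nat.sInf_le ⟨u, v, huv, rfl⟩
    unfold wt0 at hk0
    rcases max_cases (deg H u) (deg H v) with ⟨he, _⟩ | ⟨he, _⟩ <;>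
      rw [he] at hk0 <;> omega
  have hnot : ¬ ∃ u v : β, H.Adj u v ∧ ((f u = x ∧ f v = y) ∨ (f u = y ∧ f v = x)) := by
    rintro ⟨u, v, huv, ⟨hu, hv⟩ | ⟨hu, hv⟩⟩
    · exact main u v huv hu hv
    · exact main v u huv.symm hv hu
  apply hG.1
  refine ⟨f, hf, fun u v huv => ?_⟩
  rcases hmap huv with h | h
  · exact h
  · exfalso
    apply hnot
    rw [SimpleGraph.fromEdgeSet_adj, Set.mem_singleton_iff, Sym2.eq_iff] at h
    exact ⟨u, v, huv, h.1⟩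
end

section
/- Let H be a graph with at least one edge and no isolated edges, and let k1 denote the minimum over all edges uv of H of the maximum degree of a vertex in the edge neighborhood N_H(uv). Then in any H-saturated graph G, the set of vertices of G having no neighbor of degree at least k1 forms a clique. -/
open SimpleGraph

private lemma stmt1_helper {α β : Type*} [Fintype α] [Fintype β] (H : SimpleGraph β)
    (G : SimpleGraph α)
    (hiso : ∀ u v, H.Adj u v → (edgeNbhd H u v).Nonempty)
    (x y : α)
    (f : β → α) (hfinj : Function.Injective f)
    (hfadj : ∀ ⦃u v : β⦄, H.Adj u v →
      (G ⊔ SimpleGraph.fromEdgeSet {s(x, y)}).Adj (f u) (f v))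
    (a b : β) (hab : H.Adj a b) (hax : f a = x) (hby : f b = y)
    (hx : ∀ w, G.Adj x w → deg G w < paramK1 H)
    (hy : ∀ w, G.Adj y w → deg G w < paramK1 H) : False := by
  have hS : (deg H '' edgeNbhd H a b).Nonempty := (hiso a b hab).image _
  have hmem := Nat.sSup_mem hS (Set.toFinite _).bddAbove
  obtain ⟨w, hw, hdw⟩ := hmem
  have hk1 : paramK1 H ≤ deg H w := by
    rw [hdw]
    exact Nat.sInf_le ⟨a, b, hab, rfl⟩
  have hwa : w ≠ a := by
    rcases hw with ⟨hw, _⟩ | ⟨_, hw⟩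
    · exact fun h => H.irrefl (h ▸ hw)
    · simpa using hw
  have hwb : w ≠ b := by
    rcases hw with ⟨_, hw⟩ | ⟨hw, _⟩
    · simpa using hw
    · exact fun h => H.irrefl (h ▸ hw)
  have hfwx : f w ≠ x := fun h => hwa (hfinj (h.trans hax.symm))
  have hfwy : f w ≠ y := fun h => hwb (hfinj (h.trans hby.symm))
  have hGadj : ∀ u : β, H.Adj w u → G.Adj (f w) (f u) := by
    intro u hu
    rcases hfadj hu with h | h
    · exact h
    · rw [SimpleGraph.fromEdgeSet_adj] at h
      simp only [Set.mem_singleton_iff, Sym2.eq, Sym2.rel_iff', Prod.mk.injEq,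
        Prod.swap_prod_mk] at h
      rcases h.1 with ⟨h1, _⟩ | ⟨h1, _⟩
      · exact absurd h1 hfwx
      · exact absurd h1 hfwy
  have hdeg : deg H w ≤ deg G (f w) := by
    have hsub : f '' H.neighborSet w ⊆ G.neighborSet (f w) := by
      rintro _ ⟨u, hu, rfl⟩
      exact hGadj u hu
    calc deg H w = (f '' H.neighborSet w).ncard :=
          (Set.ncard_image_of_injective _ hfinj).symm
      _ ≤ deg G (f w) := Set.ncard_le_ncard hsub (Set.toFinite _)
  have hlt : deg G (f w) < paramK1 H := by
    rcases hw with ⟨hw, _⟩ | ⟨hw, _⟩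
    · exact hx (f w) (by rw [← hax]; exact (hGadj a (H.adj_symm hw)).symm)
    · exact hy (f w) (by rw [← hby]; exact (hGadj b (H.adj_symm hw)).symm)
  omega

/-- Prop. (neighbor clique, part 1): in an `H`-saturated graph, the vertices having no
neighbor of degree at least `k1` form a clique. -/
theorem stmt1 {α β : Type*} [Fintype α] [Fintype β] (H : SimpleGraph β)
    (hedge : ∃ u v, H.Adj u v)
    (hiso : ∀ u v, H.Adj u v → (edgeNbhd H u v).Nonempty)
    (G : SimpleGraph α) (hG : IsSat G H) :
    ∀ x y : α,
      (∀ w, G.Adj x w → deg G w < paramK1 H) →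
      (∀ w, G.Adj y w → deg G w < paramK1 H) →
      x ≠ y → G.Adj x y := by
  intro x y hx hy hxy
  by_contra hadj
  obtain ⟨f, hfinj, hfadj⟩ := hG.2 x y hxy hadj
  have hnew : ∃ a b, H.Adj a b ∧ ¬ G.Adj (f a) (f b) := by
    by_contra h
    push_neg at h
    exact hG.1 ⟨f, hfinj, fun u v huv => h u v huv⟩
  obtain ⟨a, b, hab, hnab⟩ := hnew
  have h' := hfadj hab
  rcases h' with h | h
  · exact hnab h
  · rw [SimpleGraph.fromEdgeSet_adj] at h
    simp only [Set.mem_singleton_iff, Sym2.eq, Sym2.rel_iff', Prod.mk.injEq,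
      Prod.swap_prod_mk] at h
    rcases h.1 with ⟨h1, h2⟩ | ⟨h1, h2⟩
    · exact stmt1_helper H G hiso x y f hfinj hfadj a b hab h1 h2 hx hy
    · exact stmt1_helper H G hiso x y f hfinj hfadj b a hab.symm h2 h1 hx hy
end

section
/- Let H be a graph with at least one edge and let k0 be the minimum over all edges uv of H of max{d_H(u), d_H(v)} − 1. Then for every integer n with n ≥ |H| (the number of vertices of H), every H-saturated graph on n vertices has at least k0·n/2 − (k0+1)²/8 edges; that is, sat(n, H) ≥ k0·n/2 − (k0+1)²/8. -/
open SimpleGraph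

lemma aux_deg {β : Type*} [Fintype β] {H : SimpleGraph β} {n : ℕ}
    {G : SimpleGraph (Fin n)} {x y : Fin n} (hxy : x ≠ y)
    {f : β → Fin n} (hinj : Function.Injective f)
    (hmap : ∀ ⦃u v : β⦄, H.Adj u v →
      (G ⊔ SimpleGraph.fromEdgeSet {s(x, y)}).Adj (f u) (f v))
    {u v : β} (hadj : H.Adj u v) (hfu : f u = x) (hfv : f v = y) :
    deg H u - 1 ≤ deg G x := by
  have hsub : f '' (H.neighborSet u \ {v}) ⊆ G.neighborSet x := by
    rintro _ ⟨w, ⟨hw, hwv⟩, rfl⟩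
    have hwadj : H.Adj u w := hw
    have h2 := hmap hwadj
    rw [hfu] at h2
    rcases h2 with h2 | h2
    · exact h2
    · exfalso
      rw [SimpleGraph.fromEdgeSet_adj] at h2
      rcases h2 with ⟨hmem, hne⟩
      simp only [Set.mem_singleton_iff, Sym2.eq_iff] at hmem
      rcases hmem with ⟨_, hfw⟩ | ⟨hxx, _⟩
      · exact hwv (by simpa using hinj (hfw.trans hfv.symm))
      · exact hxy hxx
  have h1 : (H.neighborSet u \ {v}).ncard = deg H u - 1 :=
    Set.ncard_diff_singleton_of_mem hadj
  calc deg H u - 1 = (H.neighborSet u \ {v}).ncard := h1.symm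
    _ = (f '' (H.neighborSet u \ {v})).ncard :=
        (Set.ncard_image_of_injective _ hinj).symm
    _ ≤ (G.neighborSet x).ncard := Set.ncard_le_ncard hsub (Set.toFinite _)

lemma key_nonadj {β : Type*} [Fintype β] {H : SimpleGraph β} {n : ℕ}
    {G : SimpleGraph (Fin n)} (hG : IsSat G H) {x y : Fin n}
    (hxy : x ≠ y) (hnadj : ¬ G.Adj x y) :
    paramK0 H ≤ max (deg G x) (deg G y) := by
  obtain ⟨f, hinj, hmap⟩ := hG.2 x y hxy hnadj
  have hex : ∃ u v, H.Adj u v ∧ f u = x ∧ f v = y := by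
    by_contra hne
    refine hG.1 ⟨f, hinj, fun u v huv => ?_⟩
    rcases hmap huv with h | h
    · exact h
    · exfalso
      rw [SimpleGraph.fromEdgeSet_adj] at h
      rcases h with ⟨hmem, _⟩
      simp only [Set.mem_singleton_iff, Sym2.eq_iff] at hmem
      rcases hmem with ⟨h1, h2⟩ | ⟨h1, h2⟩
      · exact hne ⟨u, v, huv, h1, h2⟩
      · exact hne ⟨v, u, huv.symm, h2, h1⟩
  obtain ⟨u, v, hadj, hfu, hfv⟩ := hex
  have hx : deg H u - 1 ≤ deg G x := aux_deg hxy hinj hmap hadj hfu hfv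
  have hmap' : ∀ ⦃a b : β⦄, H.Adj a b →
      (G ⊔ SimpleGraph.fromEdgeSet {s(y, x)}).Adj (f a) (f b) := by
    have hs : s(y, x) = s(x, y) := Sym2.eq_swap
    rw [hs]; exact hmap
  have hy : deg H v - 1 ≤ deg G y := aux_deg hxy.symm hinj hmap' hadj.symm hfv hfu
  have hk : paramK0 H ≤ wt0 H u v := Nat.sInf_le ⟨u, v, hadj, rfl⟩
  have : wt0 H u v ≤ max (deg G x) (deg G y) := by
    unfold wt0; omega
  omega

/-- `sat(n, H) ≥ k0 * n / 2 - (k0 + 1)^2 / 8` for `n ≥ |H|`. -/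
theorem stmt3 {β : Type*} [Fintype β] (H : SimpleGraph β)
    (hedge : ∃ u v, H.Adj u v)
    (n : ℕ) (hn : Fintype.card β ≤ n)
    (G : SimpleGraph (Fin n)) (hG : IsSat G H) :
    (paramK0 H : ℝ) * n / 2 - ((paramK0 H : ℝ) + 1) ^ 2 / 8 ≤ (G.edgeSet.ncard : ℝ) := by
  classical
  set k := paramK0 H with hk
  set S : Finset (Fin n) := Finset.univ.filter (fun v => deg G v < k) with hSdef
  set s := S.card with hs
  have hclique : ∀ v ∈ S, s - 1 ≤ deg G v := by
    intro v hv
    have hsub : (↑(S.erase v) : Set (Fin n)) ⊆ G.neighborSet v := by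
      intro w hw
      simp only [Finset.coe_erase, Set.mem_diff, Finset.mem_coe,
        Set.mem_singleton_iff] at hw
      by_contra hnadj
      have hne : v ≠ w := fun h => hw.2 h.symm
      have hkey := key_nonadj hG hne hnadj
      have hv' : deg G v < k := by
        have := hv; rw [hSdef] at this; simpa using this
      have hw' : deg G w < k := by
        have := hw.1; rw [hSdef] at this; simpa using this
      omega
    have h1 : (↑(S.erase v) : Set (Fin n)).ncard ≤ deg G v :=
      Set.ncard_le_ncard hsub (Set.toFinite _)
    rw [Set.ncard_coe_finset, Finset.card_erase_of_mem hv] at h1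
    exact h1
  have hout : ∀ v ∉ S, k ≤ deg G v := by
    intro v hv
    rw [hSdef] at hv
    simp only [Finset.mem_filter, Finset.mem_univ, true_and, not_lt] at hv
    exact hv
  have hdeg : ∀ v, deg G v = G.degree v := by
    intro v
    rw [deg, Set.ncard_eq_toFinset_card', SimpleGraph.degree,
      SimpleGraph.neighborFinset_def]
  have hE : G.edgeSet.ncard = G.edgeFinset.card := by
    rw [Set.ncard_eq_toFinset_card', SimpleGraph.edgeFinset]
  have hsum : ∑ v, deg G v = 2 * G.edgeSet.ncard := by
    simp_rw [hdeg, hE]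
    exact SimpleGraph.sum_degrees_eq_twice_card_edges G
  have hlow : k * (n - s) + s * (s - 1) ≤ ∑ v, deg G v := by
    have hsplit : ∑ v ∈ S, deg G v + ∑ v ∈ Sᶜ, deg G v = ∑ v, deg G v :=
      Finset.sum_add_sum_compl S _
    have h1 : s * (s - 1) ≤ ∑ v ∈ S, deg G v := by
      calc s * (s - 1) = ∑ _v ∈ S, (s - 1) := by rw [Finset.sum_const, smul_eq_mul]
        _ ≤ ∑ v ∈ S, deg G v := Finset.sum_le_sum fun v hv => hclique v hv
    have h2 : k * (n - s) ≤ ∑ v ∈ Sᶜ, deg G v := by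
      have hcard : Sᶜ.card = n - s := by
        rw [Finset.card_compl, Fintype.card_fin]
      calc k * (n - s) = ∑ _v ∈ Sᶜ, k := by
            rw [Finset.sum_const, smul_eq_mul, hcard, Nat.mul_comm]
        _ ≤ ∑ v ∈ Sᶜ, deg G v := Finset.sum_le_sum fun v hv =>
            hout v (by simpa using hv)
    omega
  have hsn : s ≤ n := by
    have := Finset.card_le_univ S
    simpa using this
  -- pass to the reals
  have hlowR : (k : ℝ) * ((n : ℝ) - s) + (s : ℝ) * ((s : ℝ) - 1) ≤
      2 * (G.edgeSet.ncard : ℝ) := by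
    have h1 : ((k * (n - s) + s * (s - 1) : ℕ) : ℝ) ≤
        ((2 * G.edgeSet.ncard : ℕ) : ℝ) := by
      exact_mod_cast hlow.trans_eq hsum
    have c1 : ((n - s : ℕ) : ℝ) = (n : ℝ) - s := by
      rw [Nat.cast_sub hsn]
    have c2 : (s : ℝ) - 1 ≤ ((s - 1 : ℕ) : ℝ) := by
      rcases Nat.eq_zero_or_pos s with h | h
      · simp [h]
      · rw [Nat.cast_sub h]; push_cast; linarith
    push_cast at h1
    rw [c1] at h1
    nlinarith [h1, c2, Nat.cast_nonneg (α := ℝ) s]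
  have hsnR : (s : ℝ) ≤ (n : ℝ) := by exact_mod_cast hsn
  nlinarith [hlowR, sq_nonneg (2 * (s : ℝ) - ((k : ℝ) + 1)),
    Nat.cast_nonneg (α := ℝ) k, Nat.cast_nonneg (α := ℝ) s]
end

section
/- Let δ and k be positive integers with δ < k. If G is a nonempty graph with minimum degree δ in which every vertex of degree exactly δ has a neighbor of degree at least k, and in addition every vertex of degree at least k has a neighbor of degree strictly larger than δ, then the average degree of G satisfies d(G) ≥ δ + (k − δ)/k. -/
open SimpleGraph

/-- Prop. warmup, second part: if in addition every vertex of degree at least `k` has a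
neighbor of degree strictly larger than `δ`, then `d(G) ≥ δ + (k - δ)/k`. -/
theorem stmt5 {α : Type*} [Fintype α] [Nonempty α] (δ k : ℕ)
    (hδ : 0 < δ) (hδk : δ < k) (G : SimpleGraph α)
    (hmin : (∀ v, δ ≤ deg G v) ∧ ∃ v, deg G v = δ)
    (hnbr : ∀ v, deg G v = δ → ∃ w, G.Adj v w ∧ k ≤ deg G w)
    (hbig : ∀ v, k ≤ deg G v → ∃ w, G.Adj v w ∧ δ < deg G w) :
    (δ : ℝ) + ((k : ℝ) - (δ : ℝ)) / (k : ℝ) ≤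
      (∑ v : α, (deg G v : ℝ)) / (Fintype.card α : ℝ) := by
  classical
  have hdeg : ∀ v, deg G v = G.degree v := by
    intro v
    simp [deg, SimpleGraph.degree, SimpleGraph.neighborFinset,
      Set.ncard_eq_toFinset_card']
  have hn : 0 < Fintype.card α := Fintype.card_pos
  have hnR : (0:ℝ) < (Fintype.card α : ℝ) := by exact_mod_cast hn
  have hkR : (0:ℝ) < (k:ℝ) := by exact_mod_cast hδ.trans hδk
  have hδR : (1:ℝ) ≤ (δ:ℝ) := by exact_mod_cast hδ
  have hδkR : (δ:ℝ) < (k:ℝ) := by exact_mod_cast hδk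
  set c : ℝ := ((k:ℝ) - (δ:ℝ))/(k:ℝ) with hc
  have hc0 : 0 ≤ c := div_nonneg (by linarith) hkR.le
  have hc1 : c ≤ 1 := by rw [hc, div_le_one hkR]; linarith
  have hck : c * k = (k:ℝ) - δ := div_mul_cancel₀ _ (ne_of_gt hkR)
  set S : Finset α := Finset.univ.filter (fun v => deg G v = δ) with hS
  set B : Finset α := Finset.univ.filter (fun v => k ≤ deg G v) with hB
  have hex : ∀ v ∈ S, ∃ w, G.Adj v w ∧ k ≤ deg G w := by
    intro v hv
    exact hnbr v (by simpa [hS] using hv)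
  choose f hf1 hf2 using hex
  set F : α → α := fun v => if h : v ∈ S then f v h else v with hF
  have hFmem : ∀ v ∈ S, F v ∈ B := by
    intro v hv
    rw [show F v = f v hv from dif_pos hv]
    simp only [hB, Finset.mem_filter, Finset.mem_univ, true_and]
    exact hf2 v hv
  have hcard : S.card = ∑ b ∈ B, (S.filter fun a => F a = b).card :=
    Finset.card_eq_sum_card_fiberwise hFmem
  have hfiber : ∀ b ∈ B, (S.filter fun a => F a = b) ⊆ S ∩ G.neighborFinset b := by
    intro b hb v hv
    simp only [Finset.mem_filter] at hv
    obtain ⟨hvS, hvF⟩ := hv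
    refine Finset.mem_inter.2 ⟨hvS, ?_⟩
    rw [SimpleGraph.mem_neighborFinset]
    have hadj := hf1 v hvS
    rw [show F v = f v hvS from dif_pos hvS] at hvF
    rw [hvF] at hadj
    exact hadj.symm
  have hScard : S.card ≤ ∑ b ∈ B, (S ∩ G.neighborFinset b).card := by
    rw [hcard]
    exact Finset.sum_le_sum fun b hb => Finset.card_le_card (hfiber b hb)
  have hBdeg : ∀ b ∈ B, (S ∩ G.neighborFinset b).card + 1 ≤ deg G b := by
    intro b hb
    obtain ⟨w, hadj, hw⟩ := hbig b (by simpa [hB] using hb)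
    have hwS : w ∉ S := by
      simp only [hS, Finset.mem_filter, Finset.mem_univ, true_and]
      omega
    have hwN : w ∈ G.neighborFinset b := by
      rw [SimpleGraph.mem_neighborFinset]; exact hadj
    have hsub : S ∩ G.neighborFinset b ⊆ (G.neighborFinset b).erase w := by
      intro v hv
      rw [Finset.mem_inter] at hv
      rw [Finset.mem_erase]
      exact ⟨fun h => hwS (h ▸ hv.1), hv.2⟩
    calc (S ∩ G.neighborFinset b).card + 1
        ≤ ((G.neighborFinset b).erase w).card + 1 :=
          Nat.add_le_add_right (Finset.card_le_card hsub) 1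
      _ = (G.neighborFinset b).card := Finset.card_erase_add_one hwN
      _ = deg G b := (hdeg b).symm
  -- real-valued estimates
  set g : α → ℝ := fun v => (deg G v : ℝ) - δ - c with hg
  have hM : ∀ v, v ∉ S → v ∉ B → 0 ≤ g v := by
    intro v hvS hvB
    have h1 : δ ≤ deg G v := hmin.1 v
    have h2 : deg G v ≠ δ := by
      intro h; exact hvS (by simp [hS, h])
    have h3 : (δ:ℝ) + 1 ≤ (deg G v : ℝ) := by exact_mod_cast by omega
    simp only [hg]
    linarith
  have hBg : ∀ b ∈ B, ((S ∩ G.neighborFinset b).card : ℝ) * c ≤ g b := by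
    intro b hb
    have hkb : (k:ℝ) ≤ (deg G b : ℝ) := by
      exact_mod_cast (by simpa [hB] using hb : k ≤ deg G b)
    have hmb : ((S ∩ G.neighborFinset b).card : ℝ) + 1 ≤ (deg G b : ℝ) := by
      exact_mod_cast hBdeg b hb
    simp only [hg]
    nlinarith [mul_le_mul_of_nonneg_right hmb hc0,
      mul_le_mul_of_nonneg_left (sub_nonneg.2 hkb) (by linarith : (0:ℝ) ≤ (δ:ℝ))]
  have hSg : ∀ v ∈ S, g v = -c := by
    intro v hv
    have : deg G v = δ := by simpa [hS] using hv
    simp [hg, this]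
  -- split the sum
  have hSB : Disjoint S B := by
    rw [Finset.disjoint_left]
    intro v hvS hvB
    have h1 : deg G v = δ := by simpa [hS] using hvS
    have h2 : k ≤ deg G v := by simpa [hB] using hvB
    omega
  have hsplit : ∑ v : α, g v =
      (∑ v ∈ S, g v) + (∑ v ∈ B, g v) + ∑ v ∈ Finset.univ \ (S ∪ B), g v := by
    rw [← Finset.sum_union hSB, ← Finset.sum_union Finset.disjoint_sdiff,
      Finset.union_sdiff_of_subset (Finset.subset_univ _)]
  have hsum0 : 0 ≤ ∑ v : α, g v := by
    rw [hsplit]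
    have e1 : ∑ v ∈ S, g v = -(S.card : ℝ) * c := by
      rw [Finset.sum_congr rfl hSg]
      simp [mul_comm]
    have e2 : ((S.card : ℝ)) * c ≤ ∑ v ∈ B, g v := by
      calc ((S.card : ℝ)) * c
          ≤ ((∑ b ∈ B, (S ∩ G.neighborFinset b).card : ℕ) : ℝ) * c := by
            apply mul_le_mul_of_nonneg_right _ hc0
            exact_mod_cast hScard
        _ = ∑ b ∈ B, ((S ∩ G.neighborFinset b).card : ℝ) * c := by
            push_cast
            rw [Finset.sum_mul]
        _ ≤ ∑ b ∈ B, g b := Finset.sum_le_sum hBg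
    have e3 : 0 ≤ ∑ v ∈ Finset.univ \ (S ∪ B), g v := by
      apply Finset.sum_nonneg
      intro v hv
      rw [Finset.mem_sdiff, Finset.mem_union] at hv
      exact hM v (fun h => hv.2 (Or.inl h)) (fun h => hv.2 (Or.inr h))
    rw [e1]
    linarith
  have hsum : ((δ:ℝ) + c) * (Fintype.card α : ℝ) ≤ ∑ v : α, (deg G v : ℝ) := by
    have : ∑ v : α, g v = (∑ v : α, (deg G v : ℝ)) - ((δ:ℝ) + c) * (Fintype.card α : ℝ) := by
      simp only [hg, sub_sub]
      rw [Finset.sum_sub_distrib, Finset.sum_const, Finset.card_univ]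
      ring_nf
    linarith [hsum0, this ▸ hsum0]
  rw [le_div_iff₀ hnR]
  linarith
end

section
/- Let H be a graph with at least one edge and no isolated edges such that k1' > k0. Then for every integer n ≥ |H|, sat(n, H) ≥ (k0 + (k1' − k0)/(k1' + 1))·n/2 − c1, where c1 = (k0 + 1)(k1' − k0)/(2·k1' + 2) + (k0 + 1)²/8. -/
open SimpleGraph

lemma aux_copy {β : Type*} {n : ℕ} (H : SimpleGraph β) (G : SimpleGraph (Fin n))
    (hfree : ¬ ContainsCopy G H) {x y : Fin n}
    (hc : ContainsCopy (G ⊔ SimpleGraph.fromEdgeSet {s(x, y)}) H) :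
    ∃ (f : β → Fin n) (u v : β), Function.Injective f ∧
      (∀ ⦃a b⦄, H.Adj a b → (G ⊔ SimpleGraph.fromEdgeSet {s(x, y)}).Adj (f a) (f b)) ∧
      H.Adj u v ∧ f u = x ∧ f v = y := by
  obtain ⟨f, hinj, hmap⟩ := hc
  by_cases hex : ∃ u v, H.Adj u v ∧ ((f u = x ∧ f v = y) ∨ (f u = y ∧ f v = x))
  · obtain ⟨u, v, huv, h | h⟩ := hex
    · exact ⟨f, u, v, hinj, hmap, huv, h.1, h.2⟩
    · exact ⟨f, v, u, hinj, hmap, huv.symm, h.2, h.1⟩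
  · push_neg at hex
    exact absurd ⟨f, hinj, fun a b hab => by
      rcases (sup_adj _ _ _ _).mp (hmap hab) with h | h
      · exact h
      · rw [fromEdgeSet_adj, Set.mem_singleton_iff, Sym2.eq_iff] at h
        rcases h.1 with ⟨h1, h2⟩ | ⟨h1, h2⟩
        · exact absurd h2 ((hex a b hab).1 h1)
        · exact absurd h2 ((hex a b hab).2 h1)⟩ hfree

lemma aux_deg_le {α β : Type*} [Fintype α] (G' : SimpleGraph α) (H : SimpleGraph β)
    (f : β → α) (hinj : Function.Injective f)
    (hmap : ∀ ⦃a b⦄, H.Adj a b → G'.Adj (f a) (f b)) (u : β) :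
    deg H u ≤ deg G' (f u) := by
  have hsub : f '' H.neighborSet u ⊆ G'.neighborSet (f u) := by
    rintro _ ⟨w, hw, rfl⟩
    exact hmap hw
  calc deg H u = (f '' H.neighborSet u).ncard := (Set.ncard_image_of_injective _ hinj).symm
    _ ≤ _ := Set.ncard_le_ncard hsub (Set.toFinite _)

lemma aux_ns_x {n : ℕ} (G : SimpleGraph (Fin n)) {x y : Fin n} (hxy : x ≠ y) :
    (G ⊔ SimpleGraph.fromEdgeSet {s(x, y)}).neighborSet x
      = insert y (G.neighborSet x) := by
  ext z
  simp only [mem_neighborSet, sup_adj, fromEdgeSet_adj, Set.mem_singleton_iff, Sym2.eq_iff,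
    Set.mem_insert_iff]
  aesop

lemma aux_deg_x {n : ℕ} (G : SimpleGraph (Fin n)) {x y : Fin n} (hxy : x ≠ y)
    (hadj : ¬ G.Adj x y) :
    deg (G ⊔ SimpleGraph.fromEdgeSet {s(x, y)}) x = deg G x + 1 := by
  have hnm : y ∉ G.neighborSet x := hadj
  rw [deg, aux_ns_x G hxy, Set.ncard_insert_of_notMem hnm (Set.toFinite _), deg]

lemma aux_deg_y {n : ℕ} (G : SimpleGraph (Fin n)) {x y : Fin n} (hxy : x ≠ y)
    (hadj : ¬ G.Adj x y) :
    deg (G ⊔ SimpleGraph.fromEdgeSet {s(x, y)}) y = deg G y + 1 := by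
  have h : ({s(x, y)} : Set (Sym2 (Fin n))) = {s(y, x)} := by
    rw [Sym2.eq_swap]
  rw [h]
  exact aux_deg_x G hxy.symm (fun h' => hadj h'.symm)

lemma aux_deg_z {n : ℕ} (G : SimpleGraph (Fin n)) {x y z : Fin n} (hzx : z ≠ x) (hzy : z ≠ y) :
    deg (G ⊔ SimpleGraph.fromEdgeSet {s(x, y)}) z = deg G z := by
  rw [deg, deg]
  congr 1
  ext w
  simp only [mem_neighborSet, sup_adj, fromEdgeSet_adj, Set.mem_singleton_iff, Sym2.eq_iff]
  tauto

lemma aux_pair {β : Type*} {n : ℕ} (H : SimpleGraph β) (G : SimpleGraph (Fin n))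
    (hG : IsSat G H) {x y : Fin n} (hxy : x ≠ y) (hadj : ¬ G.Adj x y) :
    paramK0 H ≤ max (deg G x) (deg G y) := by
  obtain ⟨f, u, v, hinj, hmap, huv, hfu, hfv⟩ :=
    aux_copy H G hG.1 (hG.2 x y hxy hadj)
  have h1 : deg H u ≤ deg G x + 1 := by
    have := aux_deg_le _ H f hinj hmap u
    rwa [hfu, aux_deg_x G hxy hadj] at this
  have h2 : deg H v ≤ deg G y + 1 := by
    have := aux_deg_le _ H f hinj hmap v
    rwa [hfv, aux_deg_y G hxy hadj] at this
  have hw : paramK0 H ≤ wt0 H u v := Nat.sInf_le ⟨u, v, huv, rfl⟩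
  have hmax : max (deg H u) (deg H v) ≤ max (deg G x) (deg G y) + 1 := by
    calc max (deg H u) (deg H v) ≤ max (deg G x + 1) (deg G y + 1) := max_le_max h1 h2
      _ = max (deg G x) (deg G y) + 1 := (Nat.succ_max_succ _ _)
  rw [wt0] at hw
  omega

lemma aux_high {β : Type*} [Fintype β] {n : ℕ} (H : SimpleGraph β) (G : SimpleGraph (Fin n))
    (hG : IsSat G H) (hiso : ∀ u v, H.Adj u v → (edgeNbhd H u v).Nonempty)
    {x y : Fin n} (hxy : x ≠ y) (hadj : ¬ G.Adj x y)
    (hdx : deg G x ≤ paramK0 H) (hdy : deg G y ≤ paramK0 H) :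
    ∃ z : Fin n, (G.Adj x z ∨ G.Adj y z) ∧ paramK1p H ≤ deg G z := by
  obtain ⟨f, u, v, hinj, hmap, huv, hfu, hfv⟩ :=
    aux_copy H G hG.1 (hG.2 x y hxy hadj)
  have h1 : deg H u ≤ deg G x + 1 := by
    have := aux_deg_le _ H f hinj hmap u
    rwa [hfu, aux_deg_x G hxy hadj] at this
  have h2 : deg H v ≤ deg G y + 1 := by
    have := aux_deg_le _ H f hinj hmap v
    rwa [hfv, aux_deg_y G hxy hadj] at this
  have hwle : paramK0 H ≤ wt0 H u v := Nat.sInf_le ⟨u, v, huv, rfl⟩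
  have hw0 : wt0 H u v = paramK0 H := by
    have hm : max (deg H u) (deg H v) ≤ max (deg G x) (deg G y) + 1 := by
      calc max (deg H u) (deg H v) ≤ max (deg G x + 1) (deg G y + 1) := max_le_max h1 h2
        _ = max (deg G x) (deg G y) + 1 := (Nat.succ_max_succ _ _)
    have h3 : max (deg G x) (deg G y) ≤ paramK0 H := max_le hdx hdy
    rw [wt0] at hwle ⊢
    omega
  have hK : paramK1p H ≤ wt1 H u v := Nat.sInf_le ⟨u, v, huv, hw0, rfl⟩
  obtain ⟨w, hwmem, hwdeg⟩ : ∃ w ∈ edgeNbhd H u v, wt1 H u v ≤ deg H w := by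
    have hne' : (deg H '' edgeNbhd H u v).Nonempty := (hiso u v huv).image _
    have hfin : (deg H '' edgeNbhd H u v).Finite := (Set.toFinite _).image _
    have hmem := Nat.sSup_mem hne' hfin.bddAbove
    obtain ⟨w, hw, hdw⟩ := hmem
    exact ⟨w, hw, hdw.ge⟩
  have hKw : paramK1p H ≤ deg H w := le_trans hK hwdeg
  rcases hwmem with ⟨hadjw, hwv⟩ | ⟨hadjw, hwu⟩
  · rw [mem_neighborSet] at hadjw
    rw [Set.mem_singleton_iff] at hwv
    have hwu : w ≠ u := fun h => H.irrefl (h ▸ hadjw)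
    have hfx : f w ≠ x := fun h => hwu (hinj (h.trans hfu.symm))
    have hfy : f w ≠ y := fun h => hwv (hinj (h.trans hfv.symm))
    have hadj' := hmap hadjw
    rw [hfu] at hadj'
    refine ⟨f w, Or.inl ?_, ?_⟩
    · rcases (sup_adj _ _ _ _).mp hadj' with h | h
      · exact h
      · rw [fromEdgeSet_adj, Set.mem_singleton_iff, Sym2.eq_iff] at h
        rcases h.1 with ⟨-, h2⟩ | ⟨h1, -⟩
        · exact absurd h2 hfy
        · exact absurd h1 hxy
    · have := aux_deg_le _ H f hinj hmap w
      rw [aux_deg_z G hfx hfy] at this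
      exact le_trans hKw this
  · rw [mem_neighborSet] at hadjw
    rw [Set.mem_singleton_iff] at hwu
    have hwv : w ≠ v := fun h => H.irrefl (h ▸ hadjw)
    have hfx : f w ≠ x := fun h => hwu (hinj (h.trans hfu.symm))
    have hfy : f w ≠ y := fun h => hwv (hinj (h.trans hfv.symm))
    have hadj' := hmap hadjw
    rw [hfv] at hadj'
    refine ⟨f w, Or.inr ?_, ?_⟩
    · rcases (sup_adj _ _ _ _).mp hadj' with h | h
      · exact h
      · rw [fromEdgeSet_adj, Set.mem_singleton_iff, Sym2.eq_iff] at h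
        rcases h.1 with ⟨h1, -⟩ | ⟨-, h2⟩
        · exact absurd h1 hxy.symm
        · exact absurd h2 hfx
    · have := aux_deg_le _ H f hinj hmap w
      rw [aux_deg_z G hfx hfy] at this
      exact le_trans hKw this

/-- Lemma (general, part 1, first bound): if `k1' > k0` then
`sat(n, H) ≥ (k0 + (k1' - k0)/(k1' + 1)) * n/2 - c1`. -/
theorem stmt6 {β : Type*} [Fintype β] (H : SimpleGraph β)
    (hedge : ∃ u v, H.Adj u v)
    (hiso : ∀ u v, H.Adj u v → (edgeNbhd H u v).Nonempty)
    (hk : paramK0 H < paramK1p H)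
    (n : ℕ) (hn : Fintype.card β ≤ n)
    (G : SimpleGraph (Fin n)) (hG : IsSat G H) :
    ((paramK0 H : ℝ) +
        ((paramK1p H : ℝ) - (paramK0 H : ℝ)) / ((paramK1p H : ℝ) + 1)) * n / 2 -
      (((paramK0 H : ℝ) + 1) * ((paramK1p H : ℝ) - (paramK0 H : ℝ)) /
          (2 * (paramK1p H : ℝ) + 2) +
        ((paramK0 H : ℝ) + 1) ^ 2 / 8) ≤
      (G.edgeSet.ncard : ℝ) := by
  classical
  set k := paramK0 H with hkdef
  set K := paramK1p H with hKdef
  have hKk : k + 1 ≤ K := hk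
  -- bridging deg and degree
  have hdeg : ∀ v : Fin n, deg G v = G.degree v := by
    intro v
    rw [deg, ← Nat.card_coe_set_eq, Nat.card_eq_fintype_card,
      SimpleGraph.card_neighborSet_eq_degree]
  have hdegF : ∀ v : Fin n, (G.neighborFinset v).card = deg G v := by
    intro v; rw [hdeg v]; rfl
  -- the four classes of vertices
  set A := Finset.univ.filter (fun v : Fin n => deg G v < k) with hAdef
  set B := Finset.univ.filter (fun v : Fin n => deg G v = k) with hBdef
  set M := Finset.univ.filter (fun v : Fin n => k < deg G v ∧ deg G v < K) with hMdef
  set C := Finset.univ.filter (fun v : Fin n => K ≤ deg G v) with hCdef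
  have hunion : Finset.univ = A ∪ (B ∪ (M ∪ C)) := by
    ext v
    simp only [Finset.mem_union, hAdef, hBdef, hMdef, hCdef, Finset.mem_filter,
      Finset.mem_univ, true_and, true_iff]
    omega
  have d1 : Disjoint A (B ∪ (M ∪ C)) := by
    rw [Finset.disjoint_left]
    intro v hv hv'
    simp only [Finset.mem_union, hAdef, hBdef, hMdef, hCdef, Finset.mem_filter,
      Finset.mem_univ, true_and] at hv hv'
    omega
  have d2 : Disjoint B (M ∪ C) := by
    rw [Finset.disjoint_left]
    intro v hv hv'
    simp only [Finset.mem_union, hBdef, hMdef, hCdef, Finset.mem_filter,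
      Finset.mem_univ, true_and] at hv hv'
    omega
  have d3 : Disjoint M C := by
    rw [Finset.disjoint_left]
    intro v hv hv'
    simp only [hMdef, hCdef, Finset.mem_filter, Finset.mem_univ, true_and] at hv hv'
    omega
  have key : ∀ g : Fin n → ℕ,
      ∑ v, g v = ∑ v ∈ A, g v + (∑ v ∈ B, g v + (∑ v ∈ M, g v + ∑ v ∈ C, g v)) := by
    intro g
    rw [hunion, Finset.sum_union d1, Finset.sum_union d2, Finset.sum_union d3]
  set a := A.card with hadef
  set b := B.card with hbdef
  set m := M.card with hmdef
  set c := C.card with hcdef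
  have hcard : a + b + m + c = n := by
    have h1 := key (fun _ => 1)
    simp only [Finset.sum_const, smul_eq_mul, mul_one, Finset.card_univ,
      Fintype.card_fin] at h1
    omega
  set SA := ∑ v ∈ A, deg G v with hSAdef
  set SB := ∑ v ∈ B, deg G v with hSBdef
  set SM := ∑ v ∈ M, deg G v with hSMdef
  set SC := ∑ v ∈ C, deg G v with hSCdef
  have hsum : SA + SB + SM + SC = 2 * G.edgeSet.ncard := by
    have h1 := key (deg G)
    have h2 : ∑ v, deg G v = 2 * G.edgeSet.ncard := by
      rw [Finset.sum_congr rfl (fun v _ => hdeg v), SimpleGraph.sum_degrees_eq_twice_card_edges,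
        SimpleGraph.edgeFinset_card, ← Nat.card_eq_fintype_card, Nat.card_coe_set_eq]
    omega
  -- A is a clique
  have hclA : ∀ x ∈ A, ∀ y ∈ A, x ≠ y → G.Adj x y := by
    intro x hx y hy hne
    by_contra hadj
    have hp := aux_pair H G hG hne hadj
    simp only [hAdef, Finset.mem_filter, Finset.mem_univ, true_and] at hx hy
    have := max_lt hx hy
    omega
  have hSA : a * a ≤ SA + a := by
    have hdA : ∀ x ∈ A, a - 1 ≤ deg G x := by
      intro x hx
      have hsub : A.erase x ⊆ G.neighborFinset x := by
        intro y hy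
        rw [Finset.mem_erase] at hy
        rw [SimpleGraph.mem_neighborFinset]
        exact hclA x hx y hy.2 (Ne.symm hy.1)
      have h1 := Finset.card_le_card hsub
      rw [Finset.card_erase_of_mem hx, hdegF x] at h1
      exact h1
    have h1 : a • (a - 1) ≤ SA := Finset.card_nsmul_le_sum A _ _ hdA
    rw [smul_eq_mul] at h1
    have h2 : a * a ≤ a * (a - 1) + a := by
      cases a with
      | zero => simp
      | succ t => simp only [Nat.succ_sub_one]; ring_nf; omega
    omega
  have hSB : SB = k * b := by
    have : SB = ∑ _v ∈ B, k := by
      apply Finset.sum_congr rfl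
      intro v hv
      simp only [hBdef, Finset.mem_filter, Finset.mem_univ, true_and] at hv
      exact hv
    rw [this, Finset.sum_const, smul_eq_mul, mul_comm]
  have hSM : (k + 1) * m ≤ SM := by
    have h1 : m • (k + 1) ≤ SM := by
      apply Finset.card_nsmul_le_sum
      intro v hv
      simp only [hMdef, Finset.mem_filter, Finset.mem_univ, true_and] at hv
      omega
    rw [smul_eq_mul, mul_comm] at h1
    exact h1
  have hSC : K * c ≤ SC := by
    have h1 : c • K ≤ SC := by
      apply Finset.card_nsmul_le_sum
      intro v hv
      simp only [hCdef, Finset.mem_filter, Finset.mem_univ, true_and] at hv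
      exact hv
    rw [smul_eq_mul, mul_comm] at h1
    exact h1
  -- low vertices and those with a high neighbor
  set L := Finset.univ.filter (fun v : Fin n => deg G v ≤ k) with hLdef
  have hLcard : L.card = a + b := by
    have hLU : L = A ∪ B := by
      ext v
      simp only [hLdef, hAdef, hBdef, Finset.mem_union, Finset.mem_filter,
        Finset.mem_univ, true_and]
      omega
    have dAB : Disjoint A B := by
      rw [Finset.disjoint_left]
      intro v hv hv'
      simp only [hAdef, hBdef, Finset.mem_filter, Finset.mem_univ, true_and] at hv hv'
      omega
    rw [hLU, Finset.card_union_of_disjoint dAB]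
  set P := L.filter (fun v => ∃ z, G.Adj v z ∧ K ≤ deg G z) with hPdef
  have hQ : (L \ P).card ≤ k + 1 := by
    rcases (L \ P).eq_empty_or_nonempty with he | ⟨x, hx⟩
    · simp [he]
    · have hxL : x ∈ L := (Finset.mem_sdiff.mp hx).1
      have hxk : deg G x ≤ k := by
        simpa only [hLdef, Finset.mem_filter, Finset.mem_univ, true_and] using hxL
      have hclq : ∀ y ∈ L \ P, y ≠ x → G.Adj x y := by
        intro y hy hne
        by_contra hadj
        have hyL := (Finset.mem_sdiff.mp hy).1
        have hyk : deg G y ≤ k := by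
          simpa only [hLdef, Finset.mem_filter, Finset.mem_univ, true_and] using hyL
        obtain ⟨z, hz, hzK⟩ := aux_high H G hG hiso (Ne.symm hne) hadj hxk hyk
        rcases hz with hzx | hzy
        · exact (Finset.mem_sdiff.mp hx).2 (Finset.mem_filter.mpr ⟨hxL, z, hzx, hzK⟩)
        · exact (Finset.mem_sdiff.mp hy).2 (Finset.mem_filter.mpr ⟨hyL, z, hzy, hzK⟩)
      have hsub : (L \ P).erase x ⊆ G.neighborFinset x := by
        intro y hy
        rw [Finset.mem_erase] at hy
        rw [SimpleGraph.mem_neighborFinset]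
        exact hclq y hy.2 hy.1
      have h1 := Finset.card_le_card hsub
      rw [Finset.card_erase_of_mem hx, hdegF x] at h1
      omega
  have hPD : P.card ≤ SC := by
    set g : Fin n → Fin n :=
      fun v => if h : ∃ z, G.Adj v z ∧ K ≤ deg G z then h.choose else v with hgdef
    have hgC : ∀ v ∈ P, g v ∈ C := by
      intro v hv
      obtain ⟨-, hex⟩ := Finset.mem_filter.mp hv
      rw [hgdef]
      simp only [dif_pos hex]
      exact Finset.mem_filter.mpr ⟨Finset.mem_univ _, hex.choose_spec.2⟩
    have hPcard := Finset.card_eq_sum_card_fiberwise hgC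
    rw [hPcard]
    apply Finset.sum_le_sum
    intro z hz
    have hsub : (P.filter (fun v => g v = z)) ⊆ G.neighborFinset z := by
      intro v hv
      obtain ⟨hvP, hgv⟩ := Finset.mem_filter.mp hv
      obtain ⟨-, hex⟩ := Finset.mem_filter.mp hvP
      rw [SimpleGraph.mem_neighborFinset]
      have hvz : G.Adj v (g v) := by
        rw [hgdef]
        simp only [dif_pos hex]
        exact hex.choose_spec.1
      rw [hgv] at hvz
      exact hvz.symm
    have h1 := Finset.card_le_card hsub
    rw [hdegF z] at h1
    exact h1
  have hLP : a + b ≤ SC + (k + 1) := by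
    have hPL : P ⊆ L := Finset.filter_subset _ _
    have h1 := Finset.card_sdiff_add_card_eq_card hPL
    omega
  -- pass to the reals
  have haR : ((a : ℝ)) * a ≤ (SA : ℝ) + a := by exact_mod_cast hSA
  have hSBR : (SB : ℝ) = (k : ℝ) * b := by exact_mod_cast hSB
  have hSMR : ((k : ℝ) + 1) * m ≤ (SM : ℝ) := by exact_mod_cast hSM
  have hSCR : (K : ℝ) * c ≤ (SC : ℝ) := by exact_mod_cast hSC
  have hLPR : (a : ℝ) + b ≤ (SC : ℝ) + ((k : ℝ) + 1) := by exact_mod_cast hLP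
  have hsumR : (SA : ℝ) + SB + SM + SC = 2 * (G.edgeSet.ncard : ℝ) := by exact_mod_cast hsum
  have hcardR : (a : ℝ) + b + m + c = n := by exact_mod_cast hcard
  have hKkR : (k : ℝ) + 1 ≤ (K : ℝ) := by exact_mod_cast hKk
  have hk0 : (0 : ℝ) ≤ (k : ℝ) := Nat.cast_nonneg _
  have hKpos : (0 : ℝ) < (K : ℝ) + 1 := by positivity
  have p1 : ((K : ℝ) + 1) * ((a : ℝ) * a) ≤ ((K : ℝ) + 1) * ((SA : ℝ) + a) :=
    mul_le_mul_of_nonneg_left haR (le_of_lt hKpos)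
  have p2 : ((K : ℝ) + 1) * (((k : ℝ) + 1) * m) ≤ ((K : ℝ) + 1) * (SM : ℝ) :=
    mul_le_mul_of_nonneg_left hSMR (le_of_lt hKpos)
  have p3 : ((k : ℝ) + 1) * ((K : ℝ) * c) ≤ ((k : ℝ) + 1) * (SC : ℝ) :=
    mul_le_mul_of_nonneg_left hSCR (by positivity)
  have p4 : ((K : ℝ) - k) * ((a : ℝ) + b) ≤ ((K : ℝ) - k) * ((SC : ℝ) + ((k : ℝ) + 1)) :=
    mul_le_mul_of_nonneg_left hLPR (by linarith)
  have p5 : (0 : ℝ) ≤ ((K : ℝ) + 1) * (2 * (a : ℝ) - ((k : ℝ) + 1)) ^ 2 := by positivity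
  have p6 : (0 : ℝ) ≤ ((k : ℝ) + 1) * (m : ℝ) := mul_nonneg (by linarith) (Nat.cast_nonneg _)
  have p7 : ((K : ℝ) + 1) * (SB : ℝ) = ((K : ℝ) + 1) * ((k : ℝ) * b) := by rw [hSBR]
  have keyI : (K : ℝ) * ((k : ℝ) + 1) * ((a : ℝ) + b + m + c) ≤
      ((K : ℝ) + 1) * ((SA : ℝ) + SB + SM + SC) + ((k : ℝ) + 1) * ((K : ℝ) - k) +
        ((K : ℝ) + 1) * ((k : ℝ) + 1) ^ 2 / 4 := by
    linarith [p1, p2, p3, p4, p5, p6, p7]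
  have keyI' : (K : ℝ) * ((k : ℝ) + 1) * (n : ℝ) ≤
      ((K : ℝ) + 1) * (2 * (G.edgeSet.ncard : ℝ)) + ((k : ℝ) + 1) * ((K : ℝ) - k) +
        ((K : ℝ) + 1) * ((k : ℝ) + 1) ^ 2 / 4 := by
    rw [← hcardR, ← hsumR]
    exact keyI
  have hne1 : (K : ℝ) + 1 ≠ 0 := ne_of_gt hKpos
  have hne2 : 2 * (K : ℝ) + 2 ≠ 0 := by positivity
  have hrw : ((k : ℝ) + ((K : ℝ) - (k : ℝ)) / ((K : ℝ) + 1)) * n / 2 -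
      (((k : ℝ) + 1) * ((K : ℝ) - (k : ℝ)) / (2 * (K : ℝ) + 2) + ((k : ℝ) + 1) ^ 2 / 8) =
      ((K : ℝ) * ((k : ℝ) + 1) * n - ((k : ℝ) + 1) * ((K : ℝ) - k) -
        ((K : ℝ) + 1) * ((k : ℝ) + 1) ^ 2 / 4) / (2 * ((K : ℝ) + 1)) := by
    field_simp
    ring
  rw [hrw, div_le_iff₀ (by positivity)]
  linarith [keyI']
end

section
/- Let H be a graph with at least one edge and no isolated edges such that k0 = k1 < k1' < k0', and suppose k0' ≤ k1' + (k0' − k0)/(k0 + 1). Then for every integer n ≥ |H|, sat(n, H) ≥ (k0 + (k0' − k0)/(k0' + 1))·n/2 − c1, where c1 = (k0 + 1)(k0' − k0)/(2·k0' + 2) + (k0 + 1)²/8. -/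
open SimpleGraph

section Helpers

variable {β : Type*} [Fintype β] {H : SimpleGraph β}

lemma le_wt1 {a b w : β} (hw : w ∈ edgeNbhd H a b) : deg H w ≤ wt1 H a b :=
  le_csSup ((Set.toFinite _).bddAbove) ⟨w, hw, rfl⟩

lemma wt1_le {a b : β} (hne : (edgeNbhd H a b).Nonempty) {m : ℕ}
    (h : ∀ w ∈ edgeNbhd H a b, deg H w ≤ m) : wt1 H a b ≤ m :=
  csSup_le (hne.image _) (by rintro x ⟨w, hw, rfl⟩; exact h w hw)

lemma wt1_mem {a b : β} (hne : (edgeNbhd H a b).Nonempty) :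
    ∃ w ∈ edgeNbhd H a b, deg H w = wt1 H a b := by
  have := Nat.sSup_mem (hne.image (deg H)) ((Set.toFinite _).bddAbove)
  obtain ⟨w, hw, h⟩ := this
  exact ⟨w, hw, h⟩

lemma k0_le_wt0 {a b : β} (hab : H.Adj a b) : paramK0 H ≤ wt0 H a b :=
  Nat.sInf_le ⟨a, b, hab, rfl⟩

lemma k1_le_wt1 {a b : β} (hab : H.Adj a b) : paramK1 H ≤ wt1 H a b :=
  Nat.sInf_le ⟨a, b, hab, rfl⟩

lemma k1p_le_wt1 {a b : β} (hab : H.Adj a b) (h : wt0 H a b = paramK0 H) :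
    paramK1p H ≤ wt1 H a b :=
  Nat.sInf_le ⟨a, b, hab, h, rfl⟩

lemma k0p_le_wt0 {a b : β} (hab : H.Adj a b) (h : wt1 H a b = paramK1 H) :
    paramK0p H ≤ wt0 H a b :=
  Nat.sInf_le ⟨a, b, hab, h, rfl⟩

lemma wt0_le_max {a b : β} {p q : ℕ} (ha : deg H a ≤ p + 1) (hb : deg H b ≤ q + 1) :
    wt0 H a b ≤ max p q := by
  have : max (deg H a) (deg H b) ≤ max p q + 1 :=
    max_le (ha.trans (by omega)) (hb.trans (by omega))
  unfold wt0; omega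

end Helpers

section Pair
variable {β : Type*} [Fintype β] {H : SimpleGraph β} {n : ℕ} {G : SimpleGraph (Fin n)}

lemma sat_pair (hG : IsSat G H) {x y : Fin n} (hxy : x ≠ y) (hna : ¬ G.Adj x y) :
    ∃ a b, H.Adj a b ∧ deg H a ≤ deg G x + 1 ∧ deg H b ≤ deg G y + 1 ∧
      ∀ w ∈ edgeNbhd H a b, ∃ u, (G.Adj x u ∨ G.Adj y u) ∧ deg H w ≤ deg G u := by
  obtain ⟨f, finj, fhom⟩ := hG.2 x y hxy hna
  have hedge : ∃ a b, H.Adj a b ∧ f a = x ∧ f b = y := by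
    by_contra hc
    push_neg at hc
    refine hG.1 ⟨f, finj, fun u v huv => ?_⟩
    rcases fhom huv with h | h
    · exact h
    · rw [fromEdgeSet_adj] at h
      rcases h with ⟨hmem, hne⟩
      simp only [Set.mem_singleton_iff] at hmem
      rcases Sym2.eq_iff.1 hmem with ⟨h1, h2⟩ | ⟨h1, h2⟩
      · exact absurd h2 (hc u v huv h1)
      · exact absurd h1 (hc v u huv.symm h2)
  obtain ⟨a, b, hab, hfa, hfb⟩ := hedge
  have hreal : ∀ {u v : β}, H.Adj u v → f u ≠ x → f u ≠ y → G.Adj (f u) (f v) := by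
    intro u v huv hux huy
    rcases fhom huv with h | h
    · exact h
    · rw [fromEdgeSet_adj] at h
      rcases h with ⟨hmem, _⟩
      simp only [Set.mem_singleton_iff] at hmem
      rcases Sym2.eq_iff.1 hmem with ⟨h1, _⟩ | ⟨h1, _⟩
      · exact absurd h1 hux
      · exact absurd h1 huy
  have hdegw : ∀ w : β, f w ≠ x → f w ≠ y → deg H w ≤ deg G (f w) := by
    intro w hwx hwy
    have himg : f '' H.neighborSet w ⊆ G.neighborSet (f w) := by
      rintro _ ⟨z, hz, rfl⟩
      exact hreal hz hwx hwy
    calc deg H w = (f '' H.neighborSet w).ncard :=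
          (Set.ncard_image_of_injective _ finj).symm
      _ ≤ (G.neighborSet (f w)).ncard := Set.ncard_le_ncard himg (Set.toFinite _)
  have hda : deg H a ≤ deg G x + 1 := by
    have himg : f '' H.neighborSet a ⊆ G.neighborSet x ∪ {y} := by
      rintro _ ⟨w, hw, rfl⟩
      have hadj := fhom ((H.mem_neighborSet a w).1 hw)
      rw [hfa] at hadj
      rcases hadj with h | h
      · exact Or.inl h
      · rw [fromEdgeSet_adj] at h
        rcases h with ⟨hmem, hne⟩
        simp only [Set.mem_singleton_iff] at hmem
        rcases Sym2.eq_iff.1 hmem with ⟨_, h2⟩ | ⟨h1, _⟩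
        · exact Or.inr (by simp [h2])
        · exact absurd h1 hxy
    calc deg H a = (f '' H.neighborSet a).ncard :=
          (Set.ncard_image_of_injective _ finj).symm
      _ ≤ (G.neighborSet x ∪ {y}).ncard := Set.ncard_le_ncard himg (Set.toFinite _)
      _ ≤ (G.neighborSet x).ncard + ({y} : Set (Fin n)).ncard := Set.ncard_union_le _ _
      _ = deg G x + 1 := by rw [Set.ncard_singleton]; rfl
  have hdb : deg H b ≤ deg G y + 1 := by
    have himg : f '' H.neighborSet b ⊆ G.neighborSet y ∪ {x} := by
      rintro _ ⟨w, hw, rfl⟩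
      have hadj := fhom ((H.mem_neighborSet b w).1 hw)
      rw [hfb] at hadj
      rcases hadj with h | h
      · exact Or.inl h
      · rw [fromEdgeSet_adj] at h
        rcases h with ⟨hmem, hne⟩
        simp only [Set.mem_singleton_iff] at hmem
        rcases Sym2.eq_iff.1 hmem with ⟨h1, _⟩ | ⟨_, h2⟩
        · exact absurd h1.symm hxy
        · exact Or.inr (by simp [h2])
    calc deg H b = (f '' H.neighborSet b).ncard :=
          (Set.ncard_image_of_injective _ finj).symm
      _ ≤ (G.neighborSet y ∪ {x}).ncard := Set.ncard_le_ncard himg (Set.toFinite _)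
      _ ≤ (G.neighborSet y).ncard + ({x} : Set (Fin n)).ncard := Set.ncard_union_le _ _
      _ = deg G y + 1 := by rw [Set.ncard_singleton]; rfl
  refine ⟨a, b, hab, hda, hdb, ?_⟩
  rintro w (⟨hw, hwb⟩ | ⟨hw, hwa⟩)
  · -- w ∈ N(a) \ {b} : f w is a G-neighbor of x
    simp only [Set.mem_singleton_iff] at hwb
    have hwx : f w ≠ x := fun h => H.ne_of_adj ((H.mem_neighborSet a w).1 hw).symm
      (finj (h.trans hfa.symm))
    have hwy : f w ≠ y := fun h => hwb (finj (h.trans hfb.symm))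
    refine ⟨f w, Or.inl ?_, hdegw w hwx hwy⟩
    have := hreal (u := w) (v := a) ((H.mem_neighborSet a w).1 hw).symm hwx hwy
    rw [hfa] at this
    exact this.symm
  · simp only [Set.mem_singleton_iff] at hwa
    have hwy : f w ≠ y := fun h => H.ne_of_adj ((H.mem_neighborSet b w).1 hw).symm
      (finj (h.trans hfb.symm))
    have hwx : f w ≠ x := fun h => hwa (finj (h.trans hfa.symm))
    refine ⟨f w, Or.inr ?_, hdegw w hwx hwy⟩
    have := hreal (u := w) (v := b) ((H.mem_neighborSet b w).1 hw).symm hwx hwy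
    rw [hfb] at this
    exact this.symm

end Pair

section Facts
variable {β : Type*} [Fintype β] {H : SimpleGraph β} {n : ℕ} {G : SimpleGraph (Fin n)}

lemma fact1 (hG : IsSat G H) {x y : Fin n} (hxy : x ≠ y) (hna : ¬ G.Adj x y) :
    paramK0 H ≤ max (deg G x) (deg G y) := by
  obtain ⟨a, b, hab, hda, hdb, _⟩ := sat_pair hG hxy hna
  exact (k0_le_wt0 hab).trans (wt0_le_max hda hdb)

lemma fact2 (hG : IsSat G H) (hiso : ∀ u v, H.Adj u v → (edgeNbhd H u v).Nonempty)
    {x y : Fin n} (hxy : x ≠ y) (hna : ¬ G.Adj x y)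
    (hx : deg G x ≤ paramK0 H) (hy : deg G y ≤ paramK0 H) :
    ∃ u, (G.Adj x u ∨ G.Adj y u) ∧ paramK1p H ≤ deg G u := by
  obtain ⟨a, b, hab, hda, hdb, hnb⟩ := sat_pair hG hxy hna
  have hle : wt0 H a b ≤ paramK0 H :=
    (wt0_le_max hda hdb).trans (max_le hx hy)
  have heq : wt0 H a b = paramK0 H := le_antisymm hle (k0_le_wt0 hab)
  have h1p := k1p_le_wt1 hab heq
  obtain ⟨w, hw, hdw⟩ := wt1_mem (hiso a b hab)
  obtain ⟨u, hu, hdu⟩ := hnb w hw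
  exact ⟨u, hu, by omega⟩

lemma fact3 (hG : IsSat G H) (hiso : ∀ u v, H.Adj u v → (edgeNbhd H u v).Nonempty)
    (h01 : paramK0 H = paramK1 H)
    {x y : Fin n} (hxy : x ≠ y) (hna : ¬ G.Adj x y)
    (hx : ∀ u, G.Adj x u → deg G u ≤ paramK0 H)
    (hy : ∀ u, G.Adj y u → deg G u ≤ paramK0 H) :
    paramK0p H ≤ max (deg G x) (deg G y) := by
  obtain ⟨a, b, hab, hda, hdb, hnb⟩ := sat_pair hG hxy hna
  have hle : wt1 H a b ≤ paramK0 H := by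
    refine wt1_le (hiso a b hab) fun w hw => ?_
    obtain ⟨u, hu, hdu⟩ := hnb w hw
    rcases hu with hu | hu
    · exact hdu.trans (hx u hu)
    · exact hdu.trans (hy u hu)
  have heq : wt1 H a b = paramK1 H := le_antisymm (h01 ▸ hle) (k1_le_wt1 hab)
  exact (k0p_le_wt0 hab heq).trans (wt0_le_max hda hdb)

end Facts

set_option maxHeartbeats 1000000 in
open Finset in
/-- Lemma (general, part 2, first case): if `k0 = k1 < k1' < k0'` and
`k0' ≤ k1' + (k0' - k0)/(k0 + 1)`, then `sat(n, H) ≥ (k0 + (k0' - k0)/(k0' + 1)) * n/2 - c1`. -/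
theorem stmt8 {β : Type*} [Fintype β] (H : SimpleGraph β)
    (hedge : ∃ u v, H.Adj u v)
    (hiso : ∀ u v, H.Adj u v → (edgeNbhd H u v).Nonempty)
    (h01 : paramK0 H = paramK1 H) (h11 : paramK1 H < paramK1p H)
    (h10 : paramK1p H < paramK0p H)
    (hcond : (paramK0p H : ℝ) ≤ (paramK1p H : ℝ) +
      ((paramK0p H : ℝ) - (paramK0 H : ℝ)) / ((paramK0 H : ℝ) + 1))
    (n : ℕ) (hn : Fintype.card β ≤ n)
    (G : SimpleGraph (Fin n)) (hG : IsSat G H) :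
    ((paramK0 H : ℝ) +
        ((paramK0p H : ℝ) - (paramK0 H : ℝ)) / ((paramK0p H : ℝ) + 1)) * n / 2 -
      (((paramK0 H : ℝ) + 1) * ((paramK0p H : ℝ) - (paramK0 H : ℝ)) /
          (2 * (paramK0p H : ℝ) + 2) +
        ((paramK0 H : ℝ) + 1) ^ 2 / 8) ≤
      (G.edgeSet.ncard : ℝ) := by
  classical
  set k0 := paramK0 H with hk0def
  set k1p := paramK1p H with hk1pdef
  set k0p := paramK0p H with hk0pdef
  have hk01 : k0 < k1p := h01 ▸ h11
  have h1p0p : k1p < k0p := h10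
  set δ : ℝ := ((k0p : ℝ) - (k0 : ℝ)) / ((k0p : ℝ) + 1) with hδdef
  have hKpos : (0:ℝ) < (k0p : ℝ) + 1 := by positivity
  have hklt : (k0 : ℝ) < (k0p : ℝ) := by exact_mod_cast (by omega : k0 < k0p)
  have hδ0 : 0 ≤ δ := by
    apply div_nonneg (by linarith) (by linarith)
  have hδ1 : δ ≤ 1 := by
    rw [hδdef, div_le_one hKpos]; linarith
  have hid : (k0p : ℝ) * (1 - δ) = (k0 : ℝ) + δ := by
    rw [hδdef]
    field_simp
    ring
  have hcond' : ((k0p : ℝ) - (k1p : ℝ)) * ((k0 : ℝ) + 1) ≤ (k0p : ℝ) - (k0 : ℝ) := by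
    have hK0pos : (0:ℝ) < (k0 : ℝ) + 1 := by positivity
    rw [← sub_le_iff_le_add'] at hcond
    calc ((k0p : ℝ) - (k1p : ℝ)) * ((k0 : ℝ) + 1)
        ≤ (((k0p : ℝ) - (k0 : ℝ)) / ((k0 : ℝ) + 1)) * ((k0 : ℝ) + 1) := by
          apply mul_le_mul_of_nonneg_right hcond (by linarith)
      _ = (k0p : ℝ) - (k0 : ℝ) := by
          field_simp
  have h1plt : (k1p : ℝ) < (k0p : ℝ) := by exact_mod_cast h1p0p
  have hk1pid : (k0 : ℝ) ≤ (k1p : ℝ) * (1 - δ) := by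
    rw [hδdef]
    rw [show (1 : ℝ) - ((k0p : ℝ) - (k0 : ℝ)) / ((k0p : ℝ) + 1)
        = ((k0 : ℝ) + 1) / ((k0p : ℝ) + 1) by field_simp; ring]
    rw [← mul_div_assoc, le_div_iff₀ hKpos]
    nlinarith [hcond', h1plt]
  -- degree bridges
  have hdeg : ∀ v : Fin n, deg G v = G.degree v := by
    intro v
    rw [deg, ← card_neighborFinset_eq_degree, neighborFinset_def,
      Set.ncard_eq_toFinset_card']
  have hdegN : ∀ v : Fin n, (G.neighborFinset v).card = deg G v := by
    intro v; rw [hdeg, card_neighborFinset_eq_degree]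
  -- special sets
  set S : Finset (Fin n) := univ.filter (fun v => deg G v < k0) with hSdef
  set S' : Finset (Fin n) :=
    univ.filter (fun v => deg G v ≤ k0 ∧ ∀ u, G.Adj v u → deg G u < k1p) with hS'def
  set Z : Finset (Fin n) :=
    univ.filter (fun v => k1p ≤ deg G v ∧ deg G v < k0p ∧
      ∀ u, G.Adj v u → deg G u ≤ k0) with hZdef
  have hSmem : ∀ v, v ∈ S ↔ deg G v < k0 := by
    intro v; simp [hSdef]
  have hS'mem : ∀ v, v ∈ S' ↔ (deg G v ≤ k0 ∧ ∀ u, G.Adj v u → deg G u < k1p) := by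
    intro v; simp [hS'def]
  have hZmem : ∀ v, v ∈ Z ↔ (k1p ≤ deg G v ∧ deg G v < k0p ∧
      ∀ u, G.Adj v u → deg G u ≤ k0) := by
    intro v; simp [hZdef]
  -- cliques
  have hScl : ∀ v ∈ S, ∀ w ∈ S, v ≠ w → G.Adj v w := by
    intro v hv w hw hvw
    by_contra hna
    have h1 := fact1 hG hvw hna
    have hv' := (hSmem v).1 hv
    have hw' := (hSmem w).1 hw
    have := max_lt hv' hw'
    omega
  have hS'cl : ∀ v ∈ S', ∀ w ∈ S', v ≠ w → G.Adj v w := by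
    intro v hv w hw hvw
    by_contra hna
    obtain ⟨hv1, hv2⟩ := (hS'mem v).1 hv
    obtain ⟨hw1, hw2⟩ := (hS'mem w).1 hw
    obtain ⟨u, hu, hdu⟩ := fact2 hG hiso hvw hna hv1 hw1
    rcases hu with hu | hu
    · have := hv2 u hu; omega
    · have := hw2 u hu; omega
  have hcliq_card : ∀ (T : Finset (Fin n)), (∀ v ∈ T, ∀ w ∈ T, v ≠ w → G.Adj v w) →
      ∀ v ∈ T, T.card ≤ deg G v + 1 := by
    intro T hT v hv
    have hsub : T.erase v ⊆ G.neighborFinset v := by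
      intro w hw
      rw [mem_neighborFinset]
      exact hT v hv w (mem_of_mem_erase hw) (Ne.symm (ne_of_mem_erase hw))
    have := card_le_card hsub
    rw [hdegN v] at this
    have h2 := Finset.card_erase_add_one hv
    omega
  have hScard : S.card ≤ k0 := by
    rcases S.eq_empty_or_nonempty with h | ⟨v, hv⟩
    · simp [h]
    · have := hcliq_card S hScl v hv
      have := (hSmem v).1 hv
      omega
  have hS'card : S'.card ≤ k0 + 1 := by
    rcases S'.eq_empty_or_nonempty with h | ⟨v, hv⟩
    · simp [h]
    · have := hcliq_card S' hS'cl v hv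
      have := ((hS'mem v).1 hv).1
      omega
  have hZcard : Z.card ≤ 1 := by
    rw [Finset.card_le_one]
    intro a ha b hb
    by_contra hab
    obtain ⟨ha1, ha2, ha3⟩ := (hZmem a).1 ha
    obtain ⟨hb1, hb2, hb3⟩ := (hZmem b).1 hb
    by_cases hadj : G.Adj a b
    · have := ha3 b hadj; omega
    · have := fact3 hG hiso h01 hab hadj ha3 hb3
      have := max_lt ha2 hb2
      omega
  have hZS' : Z.Nonempty → S'.card ≤ k0 := by
    rintro ⟨z, hz⟩
    by_contra hc
    push_neg at hc
    obtain ⟨hz1, hz2, hz3⟩ := (hZmem z).1 hz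
    -- S'.card = k0+1, so each member of S' has all its neighbors inside S'
    obtain ⟨y, hy⟩ : S'.Nonempty := Finset.card_pos.1 (by omega)
    obtain ⟨hy1, hy2⟩ := (hS'mem y).1 hy
    have hsub : S'.erase y ⊆ G.neighborFinset y := by
      intro w hw
      rw [mem_neighborFinset]
      exact hS'cl y hy w (mem_of_mem_erase hw) (Ne.symm (ne_of_mem_erase hw))
    have heq : S'.erase y = G.neighborFinset y := by
      apply Finset.eq_of_subset_of_card_le hsub
      rw [hdegN y, Finset.card_erase_of_mem hy]
      omega
    have hyall : ∀ u, G.Adj y u → deg G u ≤ k0 := by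
      intro u hu
      have : u ∈ S'.erase y := heq ▸ (mem_neighborFinset G y u).2 hu
      exact ((hS'mem u).1 (mem_of_mem_erase this)).1
    have hyz : y ≠ z := by
      intro h; rw [h] at hy1; omega
    have hna : ¬ G.Adj y z := by
      intro h
      have : z ∈ S'.erase y := heq ▸ (mem_neighborFinset G y z).2 h
      have := ((hS'mem z).1 (mem_of_mem_erase this)).1
      omega
    have := fact3 hG hiso h01 hyz hna hyall hz3
    have hmax : max (deg G y) (deg G z) < k0p := max_lt (by omega) hz2
    omega
  -- counting
  set inN : Fin n → ℕ :=
    fun v => ((G.neighborFinset v).filter (fun u => k1p ≤ deg G u)).card with hinNdef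
  set outN : Fin n → ℕ :=
    fun v => ((G.neighborFinset v).filter (fun u => deg G u ≤ k0)).card with houtNdef
  set c : Fin n → ℝ := fun v => (deg G v : ℝ)
      + δ * (if deg G v ≤ k0 then (inN v : ℝ) else 0)
      - δ * (if k1p ≤ deg G v then (outN v : ℝ) else 0) with hcdef
  set defv : Fin n → ℝ := fun v =>
      (if v ∈ S then (k0 : ℝ) - (deg G v : ℝ) else 0)
      + (if v ∈ S' then δ else 0) + (if v ∈ Z then δ else 0) with hdefvdef
  -- conservation
  set A : Fin n → Fin n → ℝ := fun v u =>
      if G.Adj v u ∧ deg G v ≤ k0 ∧ k1p ≤ deg G u then 1 else 0 with hAdef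
  have hclaim1 : ∀ v, (if deg G v ≤ k0 then (inN v : ℝ) else 0) = ∑ u, A v u := by
    intro v
    by_cases hv : deg G v ≤ k0
    · rw [if_pos hv, hinNdef]
      simp only []
      rw [neighborFinset_eq_filter, filter_filter, card_filter]
      push_cast
      apply Finset.sum_congr rfl
      intro u _
      by_cases h : G.Adj v u ∧ k1p ≤ deg G u
      · rw [if_pos h]; simp only [hAdef]; rw [if_pos ⟨h.1, hv, h.2⟩]
      · rw [if_neg h]; simp only [hAdef]
        rw [if_neg (by tauto)]
    · rw [if_neg hv]
      symm
      apply Finset.sum_eq_zero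
      intro u _
      simp only [hAdef]
      rw [if_neg (by tauto)]
  have hclaim2 : ∀ u, (if k1p ≤ deg G u then (outN u : ℝ) else 0) = ∑ v, A v u := by
    intro u
    by_cases hu : k1p ≤ deg G u
    · rw [if_pos hu, houtNdef]
      simp only []
      rw [neighborFinset_eq_filter, filter_filter, card_filter]
      push_cast
      apply Finset.sum_congr rfl
      intro v _
      by_cases h : G.Adj u v ∧ deg G v ≤ k0
      · rw [if_pos h]; simp only [hAdef]; rw [if_pos ⟨h.1.symm, h.2, hu⟩]
      · rw [if_neg h]; simp only [hAdef]
        rw [if_neg (by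
          rintro ⟨h1, h2, h3⟩
          exact h ⟨h1.symm, h2⟩)]
    · rw [if_neg hu]
      symm
      apply Finset.sum_eq_zero
      intro v _
      simp only [hAdef]
      rw [if_neg (by tauto)]
  have hcons : ∑ v, c v = ∑ v, (deg G v : ℝ) := by
    rw [hcdef]
    simp only []
    rw [Finset.sum_sub_distrib, Finset.sum_add_distrib]
    have : ∑ v, (if deg G v ≤ k0 then (inN v : ℝ) else 0)
        = ∑ v, (if k1p ≤ deg G v then (outN v : ℝ) else 0) := by
      calc ∑ v, (if deg G v ≤ k0 then (inN v : ℝ) else 0) = ∑ v, ∑ u, A v u :=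
            Finset.sum_congr rfl (fun v _ => hclaim1 v)
        _ = ∑ u, ∑ v, A v u := Finset.sum_comm
        _ = ∑ u, (if k1p ≤ deg G u then (outN u : ℝ) else 0) :=
            Finset.sum_congr rfl (fun u _ => (hclaim2 u).symm)
    rw [← Finset.mul_sum, ← Finset.mul_sum, this]
    ring
  -- per-vertex bound
  have hout_le : ∀ v, outN v ≤ deg G v := by
    intro v
    rw [houtNdef]
    simp only []
    exact (Finset.card_filter_le _ _).trans (le_of_eq (hdegN v))
  have hiteZ : ∀ v, (0:ℝ) ≤ (if v ∈ Z then δ else 0) := by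
    intro v; split
    · exact hδ0
    · exact le_rfl
  have hiteS' : ∀ v, (0:ℝ) ≤ (if v ∈ S' then δ else 0) := by
    intro v; split
    · exact hδ0
    · exact le_rfl
  have hiteS : ∀ v, (0:ℝ) ≤ (if v ∈ S then (k0 : ℝ) - (deg G v : ℝ) else 0) := by
    intro v; split
    · rename_i h
      have h2 := (hSmem v).1 h
      have : (deg G v : ℝ) + 1 ≤ (k0 : ℝ) := by exact_mod_cast h2
      linarith
    · exact le_rfl
  have hdefv_nonneg : ∀ v, 0 ≤ defv v := by
    intro v
    rw [hdefvdef]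
    simp only []
    have := hiteZ v; have := hiteS' v; have := hiteS v
    linarith
  have hlower : ∀ v, (k0 : ℝ) + δ - defv v ≤ c v := by
    intro v
    have hdefv0 := hdefv_nonneg v
    rw [hcdef]
    simp only []
    rcases le_or_gt (deg G v) k0 with hv | hv
    · -- low vertex
      have hnotP : ¬ k1p ≤ deg G v := by omega
      rw [if_pos hv, if_neg hnotP, mul_zero, sub_zero]
      by_cases hrich : ∃ u, G.Adj v u ∧ k1p ≤ deg G u
      · obtain ⟨u, hu1, hu2⟩ := hrich
        have hin1 : 1 ≤ inN v := by
          rw [hinNdef]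
          simp only []
          exact Finset.card_pos.2
            ⟨u, Finset.mem_filter.2 ⟨(mem_neighborFinset G v u).2 hu1, hu2⟩⟩
        have hin1' : (1:ℝ) ≤ (inN v : ℝ) := by exact_mod_cast hin1
        have hδin : δ * 1 ≤ δ * (inN v : ℝ) := mul_le_mul_of_nonneg_left hin1' hδ0
        by_cases hvS : v ∈ S
        · have hbound : (k0 : ℝ) - (deg G v : ℝ) ≤ defv v := by
            rw [hdefvdef]
            simp only []
            rw [if_pos hvS]
            have := hiteZ v; have := hiteS' v
            linarith
          linarith
        · have hdegv : deg G v = k0 := by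
            have := (hSmem v).not.1 hvS
            omega
          rw [hdegv]
          linarith
      · push_neg at hrich
        have hvS' : v ∈ S' := (hS'mem v).2 ⟨hv, fun u hu => by have := hrich u hu; omega⟩
        have hinN0 : inN v = 0 := by
          rw [hinNdef]
          simp only []
          rw [Finset.card_eq_zero]
          rw [Finset.filter_eq_empty_iff]
          intro u hu
          have := hrich u ((mem_neighborFinset G v u).1 hu)
          omega
        rw [hinN0]
        have hbound : (if v ∈ S then (k0 : ℝ) - (deg G v : ℝ) else 0) + δ ≤ defv v := by
          rw [hdefvdef]
          simp only []
          rw [if_pos hvS']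
          have := hiteZ v
          linarith
        by_cases hvS : v ∈ S
        · rw [if_pos hvS] at hbound
          push_cast
          linarith
        · rw [if_neg hvS] at hbound
          have hdegv : deg G v = k0 := by
            have := (hSmem v).not.1 hvS
            omega
          rw [hdegv]
          push_cast
          linarith
    · -- deg > k0
      have hnotL : ¬ deg G v ≤ k0 := not_le.2 hv
      rw [if_neg hnotL, mul_zero, add_zero]
      rcases lt_or_ge (deg G v) k1p with hv2 | hv2
      · -- medium
        rw [if_neg (not_le.2 hv2), mul_zero, sub_zero]
        have : (k0 : ℝ) + 1 ≤ (deg G v : ℝ) := by exact_mod_cast (by omega : k0 + 1 ≤ deg G v)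
        linarith
      · rw [if_pos hv2]
        have houtv : (outN v : ℝ) ≤ (deg G v : ℝ) := by exact_mod_cast hout_le v
        have hdegv2 : (k1p : ℝ) ≤ (deg G v : ℝ) := by exact_mod_cast hv2
        have hδout : 0 ≤ δ * ((deg G v : ℝ) - (outN v : ℝ)) :=
          mul_nonneg hδ0 (by linarith)
        rcases le_or_gt k0p (deg G v) with hbig | hmid
        · have hbig' : (k0p : ℝ) ≤ (deg G v : ℝ) := by exact_mod_cast hbig
          have hprod : 0 ≤ (1 - δ) * ((deg G v : ℝ) - (k0p : ℝ)) :=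
            mul_nonneg (by linarith) (by linarith)
          have key : (deg G v : ℝ) - δ * (outN v : ℝ)
              = δ * ((deg G v : ℝ) - (outN v : ℝ))
                + (1 - δ) * ((deg G v : ℝ) - (k0p : ℝ)) + (k0p : ℝ) * (1 - δ) := by ring
          linarith [hδout, hprod, hid, hdefv0, key]
        · have hprod : 0 ≤ (1 - δ) * ((deg G v : ℝ) - (k1p : ℝ)) :=
            mul_nonneg (by linarith) (by linarith)
          by_cases hallow : ∀ u, G.Adj v u → deg G u ≤ k0
          · have hvZ : v ∈ Z := (hZmem v).2 ⟨hv2, hmid, hallow⟩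
            have hbound : δ ≤ defv v := by
              rw [hdefvdef]
              simp only []
              rw [if_pos hvZ]
              have := hiteS v; have := hiteS' v
              linarith
            have key : (deg G v : ℝ) - δ * (outN v : ℝ)
                = δ * ((deg G v : ℝ) - (outN v : ℝ))
                  + (1 - δ) * ((deg G v : ℝ) - (k1p : ℝ)) + (k1p : ℝ) * (1 - δ) := by ring
            linarith [hδout, hprod, hk1pid, hbound, key]
          · push_neg at hallow
            obtain ⟨u, hu1, hu2⟩ := hallow
            have houtv1 : outN v + 1 ≤ deg G v := by
              have hsub : (G.neighborFinset v).filter (fun w => deg G w ≤ k0) ⊆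
                  (G.neighborFinset v).erase u := by
                intro w hw
                rw [Finset.mem_erase]
                obtain ⟨hw1, hw2⟩ := Finset.mem_filter.1 hw
                refine ⟨fun h => ?_, hw1⟩
                subst h
                omega
              have h1 := Finset.card_le_card hsub
              have h2 : ((G.neighborFinset v).erase u).card + 1 = deg G v := by
                rw [Finset.card_erase_of_mem ((mem_neighborFinset G v u).2 hu1), hdegN]
                have : 1 ≤ (G.neighborFinset v).card := Finset.card_pos.2
                  ⟨u, (mem_neighborFinset G v u).2 hu1⟩
                rw [hdegN] at this
                omega
              rw [houtNdef]
              simp only []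
              omega
            have houtv1' : (outN v : ℝ) ≤ (deg G v : ℝ) - 1 := by
              have : (outN v : ℝ) + 1 ≤ (deg G v : ℝ) := by exact_mod_cast houtv1
              linarith
            have hδout1 : δ * (outN v : ℝ) ≤ δ * ((deg G v : ℝ) - 1) :=
              mul_le_mul_of_nonneg_left houtv1' hδ0
            have key : (deg G v : ℝ) - δ * ((deg G v : ℝ) - 1)
                = (1 - δ) * ((deg G v : ℝ) - (k1p : ℝ)) + (k1p : ℝ) * (1 - δ) + δ := by ring
            linarith [hδout1, hprod, hk1pid, hdefv0, key]
  -- assemble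
  have hsum1 : ((k0 : ℝ) + δ) * n - ∑ v, defv v ≤ ∑ v, (deg G v : ℝ) := by
    have h1 : ∑ v, ((k0 : ℝ) + δ - defv v) ≤ ∑ v, c v :=
      Finset.sum_le_sum (fun v _ => hlower v)
    rw [hcons] at h1
    rw [Finset.sum_sub_distrib, Finset.sum_const, Finset.card_univ, Fintype.card_fin,
      nsmul_eq_mul] at h1
    linarith
  have hdefsum : ∑ v, defv v =
      (∑ v ∈ S, ((k0 : ℝ) - (deg G v : ℝ))) + S'.card * δ + Z.card * δ := by
    rw [hdefvdef]
    simp only []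
    rw [Finset.sum_add_distrib, Finset.sum_add_distrib]
    congr 1
    congr 1
    · rw [Finset.sum_ite_mem, Finset.univ_inter]
    · rw [Finset.sum_ite_mem, Finset.univ_inter, Finset.sum_const, nsmul_eq_mul]
    · rw [Finset.sum_ite_mem, Finset.univ_inter, Finset.sum_const, nsmul_eq_mul]
  have hSsum : ∑ v ∈ S, ((k0 : ℝ) - (deg G v : ℝ)) ≤ ((k0 : ℝ) + 1)^2/4 := by
    rcases S.eq_empty_or_nonempty with h | hne
    · rw [h, Finset.sum_empty]
      positivity
    · have hterm : ∀ v ∈ S, (k0 : ℝ) - (deg G v : ℝ) ≤ (k0 : ℝ) + 1 - S.card := by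
        intro v hv
        have h1 := hcliq_card S hScl v hv
        have : (S.card : ℝ) ≤ (deg G v : ℝ) + 1 := by exact_mod_cast h1
        linarith
      have h2 := Finset.sum_le_card_nsmul S _ _ hterm
      rw [nsmul_eq_mul] at h2
      have hs0 : (0:ℝ) ≤ (S.card : ℝ) := by positivity
      nlinarith [sq_nonneg ((S.card : ℝ) - ((k0 : ℝ) + 1)/2)]
  have hS'Z : (S'.card : ℝ) * δ + (Z.card : ℝ) * δ ≤ ((k0 : ℝ) + 1) * δ := by
    have hcards : (S'.card : ℝ) + (Z.card : ℝ) ≤ (k0 : ℝ) + 1 := by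
      rcases Z.eq_empty_or_nonempty with h | hne
      · rw [h]
        simp only [Finset.card_empty, Nat.cast_zero, add_zero]
        exact_mod_cast hS'card
      · have h1 := hZS' hne
        have h2 := hZcard
        exact_mod_cast (by omega : S'.card + Z.card ≤ k0 + 1)
    nlinarith [hδ0]
  have hE : ∑ v, (deg G v : ℝ) = 2 * (G.edgeSet.ncard : ℝ) := by
    have h1 : ∑ v, G.degree v = 2 * G.edgeFinset.card := G.sum_degrees_eq_twice_card_edges
    have h2 : G.edgeSet.ncard = G.edgeFinset.card := by
      rw [← coe_edgeFinset, Set.ncard_coe_finset]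
    calc ∑ v, (deg G v : ℝ) = ∑ v, ((G.degree v : ℕ) : ℝ) :=
          Finset.sum_congr rfl (fun v _ => by rw [hdeg])
      _ = ((∑ v, G.degree v : ℕ) : ℝ) := by push_cast; rfl
      _ = 2 * (G.edgeFinset.card : ℝ) := by rw [h1]; push_cast; ring
      _ = 2 * (G.edgeSet.ncard : ℝ) := by rw [h2]
  have hmain : ((k0 : ℝ) + δ) * n - (((k0 : ℝ) + 1)^2/4 + ((k0 : ℝ) + 1) * δ) ≤
      2 * (G.edgeSet.ncard : ℝ) := by
    rw [← hE]
    have := hdefsum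
    linarith [hsum1, hSsum, hS'Z]
  have hc1 : ((k0 : ℝ) + 1) * ((k0p : ℝ) - (k0 : ℝ)) / (2 * (k0p : ℝ) + 2)
      = ((k0 : ℝ) + 1) * δ / 2 := by
    rw [hδdef]
    field_simp
    try tauto
  rw [hc1]
  linarith [hmain]
end

section
/- Let s and t be positive integers with s < t, let q = max{1, ⌊s/2⌋ − 1}, and let n be an integer with n ≥ q(2t + 4) + s. Then sat(n, S_{s,t}) ≥ (s(t + 1)/(t + 2))·n/2 − c1, where c1 = s(t − s + 2)/(2t + 4) + s²/8. -/
open SimpleGraph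

/-- The double star `S_{s,t}` (for `1 ≤ s ≤ t`) on `s + t` vertices: vertex `0` is the
center of degree `s` (adjacent to `1, ..., s`), vertex `s` is the center of degree `t`
(adjacent to `0` and to `s + 1, ..., s + t - 1`). -/
def doubleStar (s t : ℕ) : SimpleGraph (Fin (s + t)) :=
  SimpleGraph.fromRel (fun a b =>
    ((a : ℕ) = 0 ∧ 1 ≤ (b : ℕ) ∧ (b : ℕ) ≤ s) ∨
    ((a : ℕ) = s ∧ s + 1 ≤ (b : ℕ) ∧ (b : ℕ) ≤ s + t - 1))



namespace DS15

variable {n s t : ℕ}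

noncomputable def dg (G : SimpleGraph (Fin n)) (v : Fin n) : ℕ := (G.neighborSet v).ncard

lemma finset_le_dg {G : SimpleGraph (Fin n)} {v : Fin n} {F : Finset (Fin n)}
    (h : ∀ a ∈ F, G.Adj v a) : F.card ≤ dg G v := by
  have hsub : (F : Set (Fin n)) ⊆ G.neighborSet v := by
    intro a ha
    exact h a (by simpa using ha)
  calc F.card = (F : Set (Fin n)).ncard := (Set.ncard_coe_finset F).symm
    _ ≤ _ := Set.ncard_le_ncard hsub (Set.toFinite _)

lemma sup_adj_cases {G : SimpleGraph (Fin n)} {x y a b : Fin n}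
    (h : (G ⊔ fromEdgeSet {s(x, y)}).Adj a b) :
    G.Adj a b ∨ (a = x ∧ b = y) ∨ (a = y ∧ b = x) := by
  rcases h with h | h
  · exact Or.inl h
  · rw [fromEdgeSet_adj] at h
    have := h.1
    simp only [Set.mem_singleton_iff, Sym2.eq_iff] at this
    tauto

lemma ds_cases {u v : Fin (s + t)} (h : (doubleStar s t).Adj u v) :
    ((u : ℕ) = 0 ∧ 1 ≤ (v : ℕ) ∧ (v : ℕ) ≤ s) ∨ ((v : ℕ) = 0 ∧ 1 ≤ (u : ℕ) ∧ (u : ℕ) ≤ s) ∨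
    ((u : ℕ) = s ∧ s + 1 ≤ (v : ℕ) ∧ (v : ℕ) ≤ s + t - 1) ∨
    ((v : ℕ) = s ∧ s + 1 ≤ (u : ℕ) ∧ (u : ℕ) ≤ s + t - 1) := by
  rw [doubleStar, SimpleGraph.fromRel_adj] at h
  tauto

lemma ds_adj_of {a b : Fin (s + t)}
    (hne : (a : ℕ) ≠ (b : ℕ))
    (h : ((a : ℕ) = 0 ∧ 1 ≤ (b : ℕ) ∧ (b : ℕ) ≤ s) ∨
      ((a : ℕ) = s ∧ s + 1 ≤ (b : ℕ) ∧ (b : ℕ) ≤ s + t - 1)) :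
    (doubleStar s t).Adj a b := by
  rw [doubleStar, SimpleGraph.fromRel_adj]
  exact ⟨fun hab => hne (by rw [hab]), Or.inl h⟩

lemma extract (hs1 : 1 ≤ s) (hst : s < t)
    {G : SimpleGraph (Fin n)} (hfree : ¬ ContainsCopy G (doubleStar s t))
    {x y : Fin n}
    (hcopy : ContainsCopy (G ⊔ fromEdgeSet {s(x, y)}) (doubleStar s t)) :
    t - 1 ≤ dg G x ∨ t - 1 ≤ dg G y ∨
    ∃ (q p z : Fin n) (Q W : Finset (Fin n)), ((q = x ∧ p = y) ∨ (q = y ∧ p = x)) ∧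
      z ∈ Q ∧ p ∉ Q ∧ q ∉ Q ∧ q ∉ W ∧ p ∉ W ∧ z ∉ W ∧ (∀ w ∈ W, w ∉ Q) ∧
      (∀ a ∈ Q, G.Adj q a) ∧ (∀ a ∈ W, G.Adj z a) ∧
      Q.card = s - 1 ∧ W.card = t - 1 := by
  obtain ⟨φ, hinj, hmap⟩ := hcopy
  have hpos : 0 < s + t := by omega
  have ht2 : 2 ≤ t := by omega
  set F : ℕ → Fin (s + t) := (fun m => ⟨m % (s + t), Nat.mod_lt m hpos⟩) with hF
  have hFv : ∀ m, m < s + t → ((F m : Fin (s + t)) : ℕ) = m := by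
    intro m hm; simp only [hF]; exact Nat.mod_eq_of_lt hm
  have hFne : ∀ (m : ℕ) (w : Fin (s + t)), m < s + t → m ≠ (w : ℕ) → F m ≠ w := by
    intro m w hm hne h
    rw [Fin.ext_iff, hFv m hm] at h
    exact hne h
  have hFeq : ∀ (m₁ m₂ : ℕ), m₁ < s + t → m₂ < s + t → F m₁ = F m₂ → m₁ = m₂ := by
    intro m₁ m₂ h₁ h₂ h
    rw [Fin.ext_iff, hFv m₁ h₁, hFv m₂ h₂] at h
    exact h
  -- there is a "new" edge in the copy
  have hnew : ∃ u v : Fin (s + t), (doubleStar s t).Adj u v ∧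
      ((φ u = x ∧ φ v = y) ∨ (φ u = y ∧ φ v = x)) := by
    by_contra hcon
    refine hfree ⟨φ, hinj, fun u v huv => ?_⟩
    rcases sup_adj_cases (hmap huv) with h | h | h
    · exact h
    · exact absurd ⟨u, v, huv, Or.inl h⟩ hcon
    · exact absurd ⟨u, v, huv, Or.inr h⟩ hcon
  obtain ⟨u, v, huv, hor⟩ := hnew
  have hxy_im : (x = φ u ∨ x = φ v) ∧ (y = φ u ∨ y = φ v) := by
    rcases hor with ⟨h1, h2⟩ | ⟨h1, h2⟩
    · exact ⟨Or.inl h1.symm, Or.inr h2.symm⟩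
    · exact ⟨Or.inr h2.symm, Or.inl h1.symm⟩
  have him : ∀ a : Fin (s + t), a ≠ u → a ≠ v → φ a ≠ x ∧ φ a ≠ y := by
    intro a ha1 ha2
    constructor
    · intro h
      rcases hxy_im.1 with hx | hx
      · exact ha1 (hinj (h.trans hx))
      · exact ha2 (hinj (h.trans hx))
    · intro h
      rcases hxy_im.2 with hy | hy
      · exact ha1 (hinj (h.trans hy))
      · exact ha2 (hinj (h.trans hy))
  have hGedge : ∀ a b : Fin (s + t), (doubleStar s t).Adj a b →
      (φ a ≠ x ∧ φ a ≠ y) → G.Adj (φ a) (φ b) := by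
    intro a b hab ha
    rcases sup_adj_cases (hmap hab) with h | ⟨h1, _⟩ | ⟨h1, _⟩
    · exact h
    · exact absurd h1 ha.1
    · exact absurd h1 ha.2
  -- main normalized argument
  have main : ∀ u' v' : Fin (s + t), (doubleStar s t).Adj u' v' →
      ((φ u' = x ∧ φ v' = y) ∨ (φ u' = y ∧ φ v' = x)) →
      (∀ a : Fin (s + t), a ≠ u' → a ≠ v' → φ a ≠ x ∧ φ a ≠ y) →
      (((u' : ℕ) = 0 ∧ 1 ≤ (v' : ℕ) ∧ (v' : ℕ) ≤ s) ∨
        ((u' : ℕ) = s ∧ s + 1 ≤ (v' : ℕ) ∧ (v' : ℕ) ≤ s + t - 1)) →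
      t - 1 ≤ dg G x ∨ t - 1 ≤ dg G y ∨
      ∃ (q p z : Fin n) (Q W : Finset (Fin n)), ((q = x ∧ p = y) ∨ (q = y ∧ p = x)) ∧
        z ∈ Q ∧ p ∉ Q ∧ q ∉ Q ∧ q ∉ W ∧ p ∉ W ∧ z ∉ W ∧ (∀ w ∈ W, w ∉ Q) ∧
        (∀ a ∈ Q, G.Adj q a) ∧ (∀ a ∈ W, G.Adj z a) ∧
        Q.card = s - 1 ∧ W.card = t - 1 := by
    clear hor hxy_im huv
    intro u v huv hor him hcls
    classical
    have hWinj : Set.InjOn (fun m => φ (F m)) ↑(Finset.Icc (s + 1) (s + t - 1)) := by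
      intro m₁ h₁ m₂ h₂ h
      simp only [Finset.coe_Icc, Set.mem_Icc] at h₁ h₂
      exact hFeq m₁ m₂ (by omega) (by omega) (hinj h)
    have hWcard : ((Finset.Icc (s + 1) (s + t - 1)).image (fun m => φ (F m))).card = t - 1 := by
      rw [Finset.card_image_of_injOn hWinj, Nat.card_Icc]
      omega
    rcases hcls with ⟨hu0, hv1, hvs⟩ | ⟨hus, hv1, hvs⟩
    · -- u is the s-center (index 0)
      by_cases hvs' : (v : ℕ) = s
      · -- center edge : φ v is the t-center and is x or y
        have hW : ∀ a ∈ (Finset.Icc (s + 1) (s + t - 1)).image (fun m => φ (F m)),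
            G.Adj (φ v) a := by
          intro a ha
          obtain ⟨m, hm, rfl⟩ := Finset.mem_image.mp ha
          rw [Finset.mem_Icc] at hm
          have hmlt : m < s + t := by omega
          have hFm_u : F m ≠ u := hFne m u hmlt (by omega)
          have hFm_v : F m ≠ v := hFne m v hmlt (by omega)
          have hadj : (doubleStar s t).Adj v (F m) := by
            refine ds_adj_of (by rw [hFv m hmlt]; omega) (Or.inr ?_)
            rw [hFv m hmlt]
            exact ⟨hvs', hm.1, hm.2⟩
          exact (hGedge (F m) v hadj.symm (him (F m) hFm_u hFm_v)).symm
        have hdg : t - 1 ≤ dg G (φ v) := by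
          have := finset_le_dg hW
          omega
        rcases hor with ⟨_, h2⟩ | ⟨_, h2⟩
        · rw [h2] at hdg; exact Or.inr (Or.inl hdg)
        · rw [h2] at hdg; exact Or.inl hdg
      · -- leaf edge at the s-center
        have hvlt : (v : ℕ) ≤ s - 1 := by omega
        set Q : Finset (Fin n) :=
          ((Finset.Icc 1 s).erase (v : ℕ)).image (fun m => φ (F m)) with hQ
        set W : Finset (Fin n) :=
          (Finset.Icc (s + 1) (s + t - 1)).image (fun m => φ (F m)) with hW
        have hmemQ : ∀ m : ℕ, m ∈ (Finset.Icc 1 s).erase (v : ℕ) →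
            (1 ≤ m ∧ m ≤ s ∧ m ≠ (v : ℕ)) := by
          intro m hm
          rw [Finset.mem_erase, Finset.mem_Icc] at hm
          exact ⟨hm.2.1, hm.2.2, hm.1⟩
        have hQcard : Q.card = s - 1 := by
          rw [hQ, Finset.card_image_of_injOn, Finset.card_erase_of_mem
            (by rw [Finset.mem_Icc]; omega), Nat.card_Icc]
          · omega
          · intro m₁ h₁ m₂ h₂ h
            simp only [Finset.coe_erase, Set.mem_diff, Finset.coe_Icc, Set.mem_Icc,
              Set.mem_singleton_iff] at h₁ h₂
            exact hFeq m₁ m₂ (by omega) (by omega) (hinj h)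
        refine Or.inr (Or.inr ⟨φ u, φ v, φ (F s), Q, W, hor, ?_, ?_, ?_, ?_, ?_, ?_, ?_,
          ?_, ?_, hQcard, hWcard⟩)
        · -- z ∈ Q
          rw [hQ, Finset.mem_image]
          exact ⟨s, by rw [Finset.mem_erase, Finset.mem_Icc]; omega, rfl⟩
        · -- p ∉ Q
          rw [hQ, Finset.mem_image]
          rintro ⟨m, hm, h⟩
          obtain ⟨h1, h2, h3⟩ := hmemQ m hm
          exact h3 (hFeq m (v : ℕ) (by omega) (by omega) (hinj (by
            rw [h]; congr 1; exact (Fin.ext (hFv (v : ℕ) (by omega))).symm)))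
        · -- q ∉ Q
          rw [hQ, Finset.mem_image]
          rintro ⟨m, hm, h⟩
          obtain ⟨h1, _, _⟩ := hmemQ m hm
          have : m = (u : ℕ) := hFeq m (u : ℕ) (by omega) (by omega) (hinj (by
            rw [h]; congr 1; exact (Fin.ext (hFv (u : ℕ) (by omega))).symm))
          omega
        · -- q ∉ W
          rw [hW, Finset.mem_image]
          rintro ⟨m, hm, h⟩
          rw [Finset.mem_Icc] at hm
          have : m = (u : ℕ) := hFeq m (u : ℕ) (by omega) (by omega) (hinj (by
            rw [h]; congr 1; exact (Fin.ext (hFv (u : ℕ) (by omega))).symm))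
          omega
        · -- p ∉ W
          rw [hW, Finset.mem_image]
          rintro ⟨m, hm, h⟩
          rw [Finset.mem_Icc] at hm
          have : m = (v : ℕ) := hFeq m (v : ℕ) (by omega) (by omega) (hinj (by
            rw [h]; congr 1; exact (Fin.ext (hFv (v : ℕ) (by omega))).symm))
          omega
        · -- z ∉ W
          rw [hW, Finset.mem_image]
          rintro ⟨m, hm, h⟩
          rw [Finset.mem_Icc] at hm
          have : m = s := hFeq m s (by omega) (by omega) (hinj h)
          omega
        · -- W ∩ Q = ∅
          intro w hw hwQ
          rw [hW, Finset.mem_image] at hw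
          rw [hQ, Finset.mem_image] at hwQ
          obtain ⟨m₁, hm₁, h₁⟩ := hw
          obtain ⟨m₂, hm₂, h₂⟩ := hwQ
          rw [Finset.mem_Icc] at hm₁
          obtain ⟨hb1, hb2, _⟩ := hmemQ m₂ hm₂
          have : m₁ = m₂ := hFeq m₁ m₂ (by omega) (by omega) (hinj (h₁.trans h₂.symm))
          omega
        · -- Adjacency of q to Q
          intro a ha
          rw [hQ, Finset.mem_image] at ha
          obtain ⟨m, hm, rfl⟩ := ha
          obtain ⟨h1, h2, h3⟩ := hmemQ m hm
          have hmlt : m < s + t := by omega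
          have hadj : (doubleStar s t).Adj u (F m) := by
            refine ds_adj_of (by rw [hFv m hmlt]; omega) (Or.inl ?_)
            rw [hFv m hmlt]
            exact ⟨hu0, h1, h2⟩
          exact (hGedge (F m) u hadj.symm
            (him (F m) (hFne m u hmlt (by omega)) (hFne m v hmlt (by omega)))).symm
        · -- Adjacency of z to W
          intro a ha
          rw [hW, Finset.mem_image] at ha
          obtain ⟨m, hm, rfl⟩ := ha
          rw [Finset.mem_Icc] at hm
          have hmlt : m < s + t := by omega
          have hadj : (doubleStar s t).Adj (F s) (F m) := by
            refine ds_adj_of (by rw [hFv m hmlt, hFv s (by omega)]; omega) (Or.inr ?_)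
            rw [hFv m hmlt, hFv s (by omega)]
            exact ⟨rfl, hm.1, hm.2⟩
          exact (hGedge (F m) (F s) hadj.symm
            (him (F m) (hFne m u hmlt (by omega)) (hFne m v hmlt (by omega)))).symm
    · -- u is the t-center (index s) and v a leaf of it
      have hT : ∀ a ∈ insert (φ (F 0))
          (((Finset.Icc (s + 1) (s + t - 1)).erase (v : ℕ)).image (fun m => φ (F m))),
          G.Adj (φ u) a := by
        intro a ha
        rcases Finset.mem_insert.mp ha with rfl | ha
        · have hadj : (doubleStar s t).Adj (F 0) u := by
            refine ds_adj_of (by rw [hFv 0 (by omega)]; omega) (Or.inl ?_)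
            rw [hFv 0 (by omega)]
            exact ⟨rfl, by omega, by omega⟩
          exact (hGedge (F 0) u hadj
            (him (F 0) (hFne 0 u (by omega) (by omega)) (hFne 0 v (by omega) (by omega)))).symm
        · obtain ⟨m, hm, rfl⟩ := Finset.mem_image.mp ha
          rw [Finset.mem_erase, Finset.mem_Icc] at hm
          have hmlt : m < s + t := by omega
          have hadj : (doubleStar s t).Adj u (F m) := by
            refine ds_adj_of (by rw [hFv m hmlt]; omega) (Or.inr ?_)
            rw [hFv m hmlt]
            exact ⟨hus, hm.2.1, hm.2.2⟩
          exact (hGedge (F m) u hadj.symm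
            (him (F m) (hFne m u hmlt (by omega)) (hFne m v hmlt (fun h => hm.1 h)))).symm
      have hTcard : (insert (φ (F 0))
          (((Finset.Icc (s + 1) (s + t - 1)).erase (v : ℕ)).image (fun m => φ (F m)))).card
          = t - 1 := by
        rw [Finset.card_insert_of_notMem, Finset.card_image_of_injOn,
          Finset.card_erase_of_mem (by rw [Finset.mem_Icc]; omega), Nat.card_Icc]
        · omega
        · intro m₁ h₁ m₂ h₂ h
          simp only [Finset.coe_erase, Set.mem_diff, Finset.coe_Icc, Set.mem_Icc] at h₁ h₂
          exact hFeq m₁ m₂ (by omega) (by omega) (hinj h)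
        · rw [Finset.mem_image]
          rintro ⟨m, hm, h⟩
          rw [Finset.mem_erase, Finset.mem_Icc] at hm
          have : m = 0 := hFeq m 0 (by omega) (by omega) (hinj h)
          omega
      have hdg : t - 1 ≤ dg G (φ u) := by
        have := finset_le_dg hT
        omega
      rcases hor with ⟨h1, _⟩ | ⟨h1, _⟩
      · rw [h1] at hdg; exact Or.inl hdg
      · rw [h1] at hdg; exact Or.inr (Or.inl hdg)
  rcases ds_cases huv with h | h | h | h
  · exact main u v huv hor him (Or.inl h)
  · refine main v u huv.symm ?_ (fun a h1 h2 => him a h2 h1) (Or.inl h)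
    · tauto
  · exact main u v huv hor him (Or.inr h)
  · refine main v u huv.symm ?_ (fun a h1 h2 => him a h2 h1) (Or.inr h)
    · tauto

end DS15

namespace DS15

lemma finset_ncard_le {F : Finset (Fin n)} {S : Set (Fin n)} (h : (F : Set (Fin n)) ⊆ S) :
    F.card ≤ S.ncard := by
  calc F.card = (F : Set (Fin n)).ncard := (Set.ncard_coe_finset F).symm
    _ ≤ _ := Set.ncard_le_ncard h (Set.toFinite _)

def goodV (s t : ℕ) (G : SimpleGraph (Fin n)) (v : Fin n) : Prop :=
  dg G v + 1 = s ∧ ∃ z, G.Adj v z ∧ t ≤ dg G z ∧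
    t - 1 ≤ ((G.neighborSet z) \ (insert v (G.neighborSet v))).ncard

def ppV (s t : ℕ) (G : SimpleGraph (Fin n)) (z v : Fin n) : Prop :=
  G.Adj v z ∧ dg G z = t ∧ goodV s t G v ∧ ∀ w, G.Adj v w → t ≤ dg G w → w = z

lemma good_of_typeb (hs1 : 1 ≤ s) (ht1 : 1 ≤ t) {G : SimpleGraph (Fin n)} {q z : Fin n}
    {Q W : Finset (Fin n)}
    (hdq : dg G q < s)
    (hzQ : z ∈ Q) (hqQ : q ∉ Q) (hqW : q ∉ W) (hWQ : ∀ w ∈ W, w ∉ Q)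
    (hQadj : ∀ a ∈ Q, G.Adj q a) (hWadj : ∀ a ∈ W, G.Adj z a)
    (hQc : Q.card = s - 1) (hWc : W.card = t - 1) : goodV s t G q := by
  have hQsub : (Q : Set (Fin n)) ⊆ G.neighborSet q := by
    intro a ha
    exact hQadj a (by simpa using ha)
  have hdq' : s - 1 ≤ dg G q := by
    have := finset_le_dg hQadj
    omega
  have hNq : (Q : Set (Fin n)) = G.neighborSet q := by
    refine Set.eq_of_subset_of_ncard_le hQsub ?_ (Set.toFinite _)
    rw [Set.ncard_coe_finset, hQc]
    have : dg G q = s - 1 := by omega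
    exact le_of_eq this
  refine ⟨by omega, z, hQadj z hzQ, ?_, ?_⟩
  · have : ∀ a ∈ insert q W, G.Adj z a := by
      intro a ha
      rcases Finset.mem_insert.mp ha with rfl | ha
      · exact (hQadj z hzQ).symm
      · exact hWadj a ha
    have := finset_le_dg this
    rw [Finset.card_insert_of_notMem hqW, hWc] at this
    omega
  · refine le_trans (le_of_eq hWc.symm) (finset_ncard_le ?_)
    intro a ha
    rw [Finset.mem_coe] at ha
    refine ⟨hWadj a ha, ?_⟩
    intro hmem
    rcases Set.mem_insert_iff.mp hmem with rfl | hmem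
    · exact hqW ha
    · rw [← hNq] at hmem
      exact hWQ a ha (by simpa using hmem)

lemma clique_lemma (hs1 : 1 ≤ s) (hst : s < t) {G : SimpleGraph (Fin n)}
    (hfree : ¬ ContainsCopy G (doubleStar s t))
    (hsat : ∀ x y : Fin n, x ≠ y → ¬G.Adj x y →
      ContainsCopy (G ⊔ fromEdgeSet {s(x, y)}) (doubleStar s t))
    {x y : Fin n} (hxy : x ≠ y) (hnadj : ¬ G.Adj x y)
    (hdx : dg G x < s) (hdy : dg G y < s)
    (hgx : ¬ goodV s t G x) (hgy : ¬ goodV s t G y) : False := by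
  rcases extract hs1 hst hfree (hsat x y hxy hnadj) with h | h |
    ⟨q, p, z, Q, W, hqp, hzQ, hpQ, hqQ, hqW, hpW, hzW, hWQ, hQadj, hWadj, hQc, hWc⟩
  · omega
  · omega
  · have hq : dg G q < s ∧ ¬ goodV s t G q := by
      rcases hqp with ⟨rfl, rfl⟩ | ⟨rfl, rfl⟩
      exacts [⟨hdx, hgx⟩, ⟨hdy, hgy⟩]
    exact hq.2 (good_of_typeb hs1 (by omega) hq.1 hzQ hqQ hqW hWQ hQadj hWadj hQc hWc)

lemma key_lemma (hs1 : 1 ≤ s) (hst : s < t) {G : SimpleGraph (Fin n)}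
    (hfree : ¬ ContainsCopy G (doubleStar s t))
    (hsat : ∀ x y : Fin n, x ≠ y → ¬G.Adj x y →
      ContainsCopy (G ⊔ fromEdgeSet {s(x, y)}) (doubleStar s t))
    {z v v' : Fin n}
    (h1 : ppV s t G z v) (h2 : ppV s t G z v') (hne : v ≠ v') : False := by
  obtain ⟨hadj1, hdz, hgood1, huniq1⟩ := h1
  obtain ⟨hadj2, _, hgood2, huniq2⟩ := h2
  obtain ⟨hdv, zz, hzzadj, hzzdeg, hz₀n⟩ := hgood1
  have hzze : zz = z := huniq1 zz hzzadj hzzdeg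
  rw [hzze] at hz₀n
  have hvNz : v ∈ G.neighborSet z := hadj1.symm
  have hv'Nz : v' ∈ G.neighborSet z := hadj2.symm
  have hsub : G.neighborSet z \ insert v (G.neighborSet v) ⊆ G.neighborSet z \ {v} := by
    intro a ha
    exact ⟨ha.1, fun h => ha.2 (by rw [Set.mem_singleton_iff] at h; rw [h]; exact Set.mem_insert _ _)⟩
  have hcard2 : (G.neighborSet z \ {v}).ncard = t - 1 := by
    rw [Set.ncard_diff_singleton_of_mem hvNz]
    have : (G.neighborSet z).ncard = t := hdz
    omega
  have heq : G.neighborSet z \ insert v (G.neighborSet v) = G.neighborSet z \ {v} :=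
    Set.eq_of_subset_of_ncard_le hsub (by omega) (Set.toFinite _)
  have hnadj : ¬ G.Adj v v' := by
    intro h
    have hmem : v' ∈ G.neighborSet z \ {v} := ⟨hv'Nz, by simpa using hne.symm⟩
    rw [← heq] at hmem
    exact hmem.2 (Set.mem_insert_of_mem _ h)
  rcases extract hs1 hst hfree (hsat v v' hne hnadj) with h | h |
    ⟨q, p, z', Q, W, hqp, hzQ, hpQ, hqQ, hqW, hpW, hzW, hWQ, hQadj, hWadj, hQc, hWc⟩
  · omega
  · have := hgood2.1
    omega
  · -- q and p are v, v' in some order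
    have hfacts : (∀ w, G.Adj q w → t ≤ dg G w → w = z) ∧ G.Adj z q ∧ G.Adj z p ∧ q ≠ p := by
      rcases hqp with ⟨rfl, rfl⟩ | ⟨rfl, rfl⟩
      exacts [⟨huniq1, hadj1.symm, hadj2.symm, hne⟩, ⟨huniq2, hadj2.symm, hadj1.symm, hne.symm⟩]
    obtain ⟨huq, hzq, hzp, hqnep⟩ := hfacts
    have hz'adj : G.Adj q z' := hQadj z' hzQ
    have hdz' : t ≤ dg G z' := by
      have hins : ∀ a ∈ insert q W, G.Adj z' a := by
        intro a ha
        rcases Finset.mem_insert.mp ha with rfl | ha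
        · exact (hQadj z' hzQ).symm
        · exact hWadj a ha
      have := finset_le_dg hins
      rw [Finset.card_insert_of_notMem hqW, hWc] at this
      omega
    have hz' : z' = z := huq z' hz'adj hdz'
    rw [hz'] at hWadj hzW
    -- W sits inside N z \ {q, p}, which has only t - 2 elements
    have hWsub : (W : Set (Fin n)) ⊆ (G.neighborSet z \ {q}) \ {p} := by
      intro a ha
      rw [Finset.mem_coe] at ha
      refine ⟨⟨hWadj a ha, ?_⟩, ?_⟩
      · intro h
        rw [Set.mem_singleton_iff] at h
        subst h
        exact hqW ha
      · intro h
        rw [Set.mem_singleton_iff] at h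
        subst h
        exact hpW ha
    have hcard3 : ((G.neighborSet z \ {q}) \ {p}).ncard = t - 2 := by
      have h1 : (G.neighborSet z \ {q}).ncard = t - 1 := by
        rw [Set.ncard_diff_singleton_of_mem (by exact hzq)]
        have : (G.neighborSet z).ncard = t := hdz
        omega
      have hp' : p ∈ G.neighborSet z \ {q} := ⟨hzp, by simpa using hqnep.symm⟩
      rw [Set.ncard_diff_singleton_of_mem hp', h1]
      omega
    have := finset_ncard_le hWsub
    omega

end DS15

namespace DS15

lemma algfin (kk nn ss ee : ℝ) (hs : 1 ≤ ss) (he0 : 0 ≤ ee) (he1 : ee ≤ 1) :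
    (ss - ee) * nn - (ss * (1 - ee) + ss ^ 2 / 4)
      ≤ kk * (kk - 1) + (nn - kk) * (ss - ee) := by
  nlinarith [sq_nonneg (2 * kk - (ss + 1 - ee)),
    mul_nonneg (by linarith : (0:ℝ) ≤ 1 - ee) (by linarith : (0:ℝ) ≤ 2 * ss - (1 - ee))]

lemma main_count (hs1 : 1 ≤ s) (hst : s < t) {G : SimpleGraph (Fin n)}
    (hfree : ¬ ContainsCopy G (doubleStar s t))
    (hsat : ∀ x y : Fin n, x ≠ y → ¬G.Adj x y →
      ContainsCopy (G ⊔ fromEdgeSet {s(x, y)}) (doubleStar s t)) :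
    (s : ℝ) * ((t : ℝ) + 1) / ((t : ℝ) + 2) * n
      - 2 * ((s : ℝ) * ((t : ℝ) - (s : ℝ) + 2) / (2 * (t : ℝ) + 4) + (s : ℝ) ^ 2 / 8)
      ≤ ∑ v : Fin n, (dg G v : ℝ) := by
  classical
  have htpos : (0 : ℝ) < (t : ℝ) + 2 := by positivity
  set ε : ℝ := (s : ℝ) / ((t : ℝ) + 2) with hε
  clear_value ε
  have hε0 : 0 ≤ ε := by rw [hε]; positivity
  have hid : ε * ((t : ℝ) + 2) = s := by
    rw [hε]; field_simp
  have hst' : (s : ℝ) + 1 ≤ (t : ℝ) := by exact_mod_cast hst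
  have hs1' : (1 : ℝ) ≤ (s : ℝ) := by exact_mod_cast hs1
  have hε1 : ε ≤ 1 := by
    rw [hε, div_le_one htpos]; linarith
  set τ : ℝ := (s : ℝ) - ε with hτ
  clear_value τ
  set K : Finset (Fin n) := Finset.univ.filter (fun v => dg G v < s ∧ ¬ goodV s t G v) with hK
  clear_value K
  set k : ℕ := K.card with hk
  clear_value k
  have hKmem : ∀ v, v ∈ K ↔ (dg G v < s ∧ ¬ goodV s t G v) := by
    intro v; rw [hK, Finset.mem_filter]; simp
  have hclique : ∀ v ∈ K, ∀ w ∈ K, v ≠ w → G.Adj v w := by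
    intro v hv w hw hvw
    by_contra hna
    have h1 := (hKmem v).mp hv
    have h2 := (hKmem w).mp hw
    exact clique_lemma hs1 hst hfree hsat hvw hna h1.1 h2.1 h1.2 h2.2
  have hKdeg : ∀ v ∈ K, (k - 1 : ℕ) ≤ dg G v := by
    intro v hv
    have hadj : ∀ a ∈ K.erase v, G.Adj v a := by
      intro a ha
      rw [Finset.mem_erase] at ha
      exact hclique v hv a ha.2 (Ne.symm ha.1)
    have := finset_le_dg hadj
    rw [Finset.card_erase_of_mem hv, ← hk] at this
    exact this
  -- transfers
  set Tb : Fin n → Fin n → ℝ := fun z u =>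
    if (G.Adj z u ∧ dg G u < s) then
      (if t + 1 ≤ dg G z then 1 - ε else if dg G z = t then (1 - ε) / 2 else 0)
    else 0 with hTb
  set Tp : Fin n → Fin n → ℝ := fun z u => if ppV s t G z u then (1 - ε) / 2 else 0 with hTp
  clear_value Tb Tp
  have h1e : (0:ℝ) ≤ 1 - ε := by linarith
  have h2e : (0:ℝ) ≤ (1 - ε) / 2 := by linarith
  have hTbnn : ∀ z u, 0 ≤ Tb z u := by
    intro z u
    simp only [hTb]
    split_ifs <;> first | linarith | exact le_rfl
  have hTpnn : ∀ z u, 0 ≤ Tp z u := by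
    intro z u
    simp only [hTp]
    split_ifs <;> first | linarith | exact le_rfl
  have hTnn : ∀ z u, 0 ≤ Tb z u + Tp z u := fun z u => add_nonneg (hTbnn z u) (hTpnn z u)
  have hdgF : ∀ v, dg G v = (G.neighborFinset v).card := by
    intro v
    rw [SimpleGraph.neighborFinset_def, dg, Set.ncard_eq_toFinset_card']
  -- out-flow bounds
  have hout_low : ∀ v, dg G v < t → (∑ u, (Tb v u + Tp v u)) = 0 := by
    intro v hv
    apply Finset.sum_eq_zero
    intro u _
    have h1 : Tb v u = 0 := by
      simp only [hTb]
      split_ifs with hc h2 h3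
      · omega
      · omega
      · rfl
      · rfl
    have h2 : Tp v u = 0 := by
      simp only [hTp]
      rw [if_neg]
      intro hpp
      have := hpp.2.1
      omega
    rw [h1, h2, add_zero]
  have hout_t : ∀ v, dg G v = t →
      (∑ u, (Tb v u + Tp v u)) ≤ ((t : ℝ) + 1) * ((1 - ε) / 2) := by
    intro v hv
    have hb : ∑ u, Tb v u ≤ (t : ℝ) * ((1 - ε) / 2) := by
      have hpt : ∀ u, Tb v u ≤ (if u ∈ G.neighborFinset v then (1 - ε) / 2 else 0) := by
        intro u
        simp only [hTb]
        split_ifs with hc h2 h3 <;>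
          first
          | omega
          | linarith
          | (exact absurd ((SimpleGraph.mem_neighborFinset _ _ _).mpr hc.1) (by assumption))
          | exact le_rfl
      calc ∑ u, Tb v u ≤ ∑ u, (if u ∈ G.neighborFinset v then (1 - ε) / 2 else 0) :=
            Finset.sum_le_sum (fun u _ => hpt u)
        _ = ((G.neighborFinset v).card : ℝ) * ((1 - ε) / 2) := by
            rw [Finset.sum_ite_mem, Finset.univ_inter, Finset.sum_const, nsmul_eq_mul]
        _ = (t : ℝ) * ((1 - ε) / 2) := by rw [← hdgF, hv]
    have hp : ∑ u, Tp v u ≤ (1 - ε) / 2 := by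
      have heq : ∑ u, Tp v u
          = ((Finset.univ.filter (fun u => ppV s t G v u)).card : ℝ) * ((1 - ε) / 2) := by
        simp only [hTp]
        rw [Finset.sum_ite, Finset.sum_const_zero, add_zero, Finset.sum_const, nsmul_eq_mul]
      rw [heq]
      have hcard : (Finset.univ.filter (fun u => ppV s t G v u)).card ≤ 1 := by
        apply Finset.card_le_one.mpr
        intro a ha b hb
        rw [Finset.mem_filter] at ha hb
        by_contra hab
        exact key_lemma hs1 hst hfree hsat ha.2 hb.2 hab
      have : ((Finset.univ.filter (fun u => ppV s t G v u)).card : ℝ) ≤ 1 := by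
        exact_mod_cast hcard
      nlinarith
    have := Finset.sum_add_distrib (s := (Finset.univ : Finset (Fin n)))
      (f := fun u => Tb v u) (g := fun u => Tp v u)
    calc ∑ u, (Tb v u + Tp v u) = (∑ u, Tb v u) + (∑ u, Tp v u) := Finset.sum_add_distrib
      _ ≤ (t : ℝ) * ((1 - ε) / 2) + (1 - ε) / 2 := add_le_add hb hp
      _ = ((t : ℝ) + 1) * ((1 - ε) / 2) := by ring
  have hout_heavy : ∀ v, t + 1 ≤ dg G v →
      (∑ u, (Tb v u + Tp v u)) ≤ (1 - ε) * (dg G v : ℝ) := by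
    intro v hv
    have hb : ∀ u, Tb v u + Tp v u ≤ (if u ∈ G.neighborFinset v then (1 - ε) else 0) := by
      intro u
      have h2 : Tp v u = 0 := by
        simp only [hTp]
        rw [if_neg]
        intro hpp
        have := hpp.2.1
        omega
      rw [h2, add_zero]
      simp only [hTb]
      split_ifs with hc h1 <;>
        first
        | omega
        | linarith
        | (exact absurd ((SimpleGraph.mem_neighborFinset _ _ _).mpr hc.1) (by assumption))
        | exact le_rfl
    calc ∑ u, (Tb v u + Tp v u) ≤ ∑ u, (if u ∈ G.neighborFinset v then (1 - ε) else 0) :=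
          Finset.sum_le_sum (fun u _ => hb u)
      _ = ((G.neighborFinset v).card : ℝ) * (1 - ε) := by
          rw [Finset.sum_ite_mem, Finset.univ_inter, Finset.sum_const, nsmul_eq_mul]
      _ = (1 - ε) * (dg G v : ℝ) := by rw [← hdgF]; ring
  -- in-flow for good deficient vertices
  have hin_good : ∀ v, dg G v < s → goodV s t G v →
      (1 - ε) ≤ ∑ z, (Tb z v + Tp z v) := by
    intro v hdv hgood
    by_cases hh : ∃ h, G.Adj v h ∧ t + 1 ≤ dg G h
    · obtain ⟨h, hadj, hdh⟩ := hh
      have hterm : (1 - ε) ≤ Tb h v + Tp h v := by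
        have : Tb h v = 1 - ε := by
          simp only [hTb]
          rw [if_pos ⟨hadj.symm, hdv⟩, if_pos hdh]
        rw [this]
        have := hTpnn h v
        linarith
      exact le_trans hterm (Finset.single_le_sum (fun z _ => hTnn z v) (Finset.mem_univ h))
    · by_cases h2 : ∃ z₁ z₂, z₁ ≠ z₂ ∧ G.Adj v z₁ ∧ G.Adj v z₂ ∧ dg G z₁ = t ∧ dg G z₂ = t
      · obtain ⟨z₁, z₂, hne, ha1, ha2, hd1, hd2⟩ := h2
        have hterm1 : (1 - ε) / 2 ≤ Tb z₁ v + Tp z₁ v := by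
          have : Tb z₁ v = (1 - ε) / 2 := by
            simp only [hTb]
            rw [if_pos ⟨ha1.symm, hdv⟩, if_neg (by omega), if_pos hd1]
          rw [this]
          have := hTpnn z₁ v
          linarith
        have hterm2 : (1 - ε) / 2 ≤ Tb z₂ v + Tp z₂ v := by
          have : Tb z₂ v = (1 - ε) / 2 := by
            simp only [hTb]
            rw [if_pos ⟨ha2.symm, hdv⟩, if_neg (by omega), if_pos hd2]
          rw [this]
          have := hTpnn z₂ v
          linarith
        have hsub : ({z₁, z₂} : Finset (Fin n)) ⊆ Finset.univ := Finset.subset_univ _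
        have hps : ∑ z ∈ ({z₁, z₂} : Finset (Fin n)), (Tb z v + Tp z v)
            ≤ ∑ z, (Tb z v + Tp z v) :=
          Finset.sum_le_sum_of_subset_of_nonneg hsub (fun z _ _ => hTnn z v)
        rw [Finset.sum_pair hne] at hps
        linarith
      · -- v is poor: unique witness z of degree exactly t
        obtain ⟨hdv1, z, hadj, hdz, hdisj⟩ := hgood
        have hdzt : dg G z = t := by
          by_contra hne'
          exact hh ⟨z, hadj, by omega⟩
        have huniq : ∀ w, G.Adj v w → t ≤ dg G w → w = z := by
          intro w hw hdw
          by_contra hwz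
          have hdwt : dg G w = t := by
            by_contra h'
            exact hh ⟨w, hw, by omega⟩
          exact h2 ⟨w, z, hwz, hw, hadj, hdwt, hdzt⟩
        have hpp : ppV s t G z v := ⟨hadj, hdzt, ⟨hdv1, z, hadj, by omega, hdisj⟩, huniq⟩
        have hterm : (1 - ε) ≤ Tb z v + Tp z v := by
          have hb : Tb z v = (1 - ε) / 2 := by
            simp only [hTb]
            rw [if_pos ⟨hadj.symm, hdv⟩, if_neg (by omega), if_pos hdzt]
          have hp : Tp z v = (1 - ε) / 2 := by
            simp only [hTp]
            rw [if_pos hpp]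
          rw [hb, hp]
          linarith
        exact le_trans hterm (Finset.single_le_sum (fun z _ => hTnn z v) (Finset.mem_univ z))
  -- the charge function
  set f : Fin n → ℝ := fun v =>
    (dg G v : ℝ) + (∑ z, (Tb z v + Tp z v)) - (∑ u, (Tb v u + Tp v u)) with hf
  clear_value f
  have hsumf : ∑ v, f v = ∑ v, (dg G v : ℝ) := by
    have h1 : ∑ v, (∑ z, (Tb z v + Tp z v)) = ∑ z, (∑ v, (Tb z v + Tp z v)) :=
      Finset.sum_comm
    simp only [hf]
    rw [Finset.sum_sub_distrib, Finset.sum_add_distrib, h1]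
    ring
  -- per-vertex lower bound
  have hfv : ∀ v, (if v ∈ K then ((k : ℝ) - 1) else τ) ≤ f v := by
    intro v
    have hinn : 0 ≤ ∑ z, (Tb z v + Tp z v) :=
      Finset.sum_nonneg (fun z _ => hTnn z v)
    by_cases hvK : v ∈ K
    · rw [if_pos hvK]
      have hdlt : dg G v < s := ((hKmem v).mp hvK).1
      have hout : (∑ u, (Tb v u + Tp v u)) = 0 := hout_low v (by omega)
      have hk1 : 1 ≤ k := by
        rw [hk]
        exact Finset.card_pos.mpr ⟨v, hvK⟩
      have h2 := hKdeg v hvK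
      have h3 : ((k : ℝ) - 1) ≤ (dg G v : ℝ) := by
        have : ((k - 1 : ℕ) : ℝ) ≤ (dg G v : ℝ) := by exact_mod_cast h2
        rw [Nat.cast_sub hk1] at this
        simpa using this
      simp only [hf]
      linarith
    · rw [if_neg hvK]
      rcases Nat.lt_or_ge (dg G v) s with hd | hd
      · have hgood : goodV s t G v := by
          by_contra hng
          exact hvK ((hKmem v).mpr ⟨hd, hng⟩)
        have hin := hin_good v hd hgood
        have hout : (∑ u, (Tb v u + Tp v u)) = 0 := hout_low v (by omega)
        have hdv' : dg G v + 1 = s := hgood.1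
        have hcast : (dg G v : ℝ) = (s : ℝ) - 1 := by
          have : ((dg G v : ℝ) + 1) = (s : ℝ) := by exact_mod_cast hdv'
          linarith
        simp only [hf, hτ]
        rw [hcast, hout]
        linarith
      rcases Nat.lt_or_ge (dg G v) t with hdt | hdt
      · have hout : (∑ u, (Tb v u + Tp v u)) = 0 := hout_low v hdt
        have hcast : (s : ℝ) ≤ (dg G v : ℝ) := by exact_mod_cast hd
        simp only [hf, hτ]
        rw [hout]
        linarith
      rcases Nat.eq_or_lt_of_le hdt with hdeq | hdgt
      · have hout := hout_t v hdeq.symm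
        have hcast : (dg G v : ℝ) = (t : ℝ) := by exact_mod_cast hdeq.symm
        have hid' : ε * (t : ℝ) + 2 * ε = (s : ℝ) := by linear_combination hid
        have hkey : (s : ℝ) - ε ≤ (t : ℝ) - ((t : ℝ) + 1) * ((1 - ε) / 2) := by
          linarith [hid', hε0, hst']
        simp only [hf, hτ]
        rw [hcast]
        linarith
      · have hht : t + 1 ≤ dg G v := hdgt
        have hout := hout_heavy v hht
        have hcast : (t : ℝ) + 1 ≤ (dg G v : ℝ) := by exact_mod_cast hht
        have hkey : ε * ((t : ℝ) + 1) = (s : ℝ) - ε := by linear_combination hid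
        have h5 : ε * ((t : ℝ) + 1) ≤ ε * (dg G v : ℝ) :=
          mul_le_mul_of_nonneg_left hcast hε0
        simp only [hf, hτ]
        have hring : (dg G v : ℝ) - (1 - ε) * (dg G v : ℝ) = ε * (dg G v : ℝ) := by ring
        linarith [hout, hinn, h5, hkey, hring]
  -- summation
  have hkn : k ≤ n := by
    rw [hk]
    calc K.card ≤ (Finset.univ : Finset (Fin n)).card := Finset.card_le_card (Finset.subset_univ _)
      _ = n := by simp
  have hgsum : ∑ v : Fin n, (if v ∈ K then ((k : ℝ) - 1) else τ)
      = (k : ℝ) * ((k : ℝ) - 1) + ((n : ℝ) - (k : ℝ)) * τ := by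
    rw [Finset.sum_ite, Finset.sum_const, Finset.sum_const, nsmul_eq_mul, nsmul_eq_mul]
    have e1 : Finset.univ.filter (fun v => v ∈ K) = K := by
      ext v; simp
    have e2 : (Finset.univ.filter (fun v => ¬ v ∈ K)).card = n - k := by
      have : Finset.univ.filter (fun v => ¬ v ∈ K) = Kᶜ := by
        ext v; simp
      rw [this, Finset.card_compl]
      simp [hk]
    rw [e1, e2, ← hk]
    have : ((n - k : ℕ) : ℝ) = (n : ℝ) - (k : ℝ) := by
      rw [Nat.cast_sub hkn]
    rw [this]
  have hsum : (k : ℝ) * ((k : ℝ) - 1) + ((n : ℝ) - (k : ℝ)) * τ ≤ ∑ v, (dg G v : ℝ) := by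
    rw [← hsumf, ← hgsum]
    exact Finset.sum_le_sum (fun v _ => hfv v)
  -- final algebra
  have hτeq : (s : ℝ) * ((t : ℝ) + 1) / ((t : ℝ) + 2) = τ := by
    rw [hτ, hε]
    field_simp
    ring
  have hc1eq : 2 * ((s : ℝ) * ((t : ℝ) - (s : ℝ) + 2) / (2 * (t : ℝ) + 4) + (s : ℝ) ^ 2 / 8)
      = (s : ℝ) * (1 - ε) + (s : ℝ) ^ 2 / 4 := by
    rw [hε]
    field_simp
    ring
  rw [hτeq, hc1eq, hτ]
  rw [hτ] at hsum
  have hfin := algfin (k : ℝ) (n : ℝ) (s : ℝ) ε hs1' hε0 hε1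
  linarith only [hfin, hsum]

end DS15


/-- Theorem (double star, lower bound): for `s < t` and
`n ≥ q(2t + 4) + s` with `q = max 1 (⌊s/2⌋ - 1)`,
`sat(n, S_{s,t}) ≥ (s(t + 1)/(t + 2)) * n/2 - c1`. -/
theorem stmt15 (s t : ℕ) (hs : 0 < s) (hst : s < t)
    (n : ℕ) (hn : max 1 (s / 2 - 1) * (2 * t + 4) + s ≤ n)
    (G : SimpleGraph (Fin n)) (hG : IsSat G (doubleStar s t)) :
    ((s : ℝ) * ((t : ℝ) + 1) / ((t : ℝ) + 2)) * n / 2 -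
      ((s : ℝ) * ((t : ℝ) - (s : ℝ) + 2) / (2 * (t : ℝ) + 4) + (s : ℝ) ^ 2 / 8) ≤
      (G.edgeSet.ncard : ℝ) := by
  classical
  obtain ⟨hfree, hsat⟩ := hG
  have hmain := DS15.main_count hs hst hfree hsat
  have hhs : ∑ v : Fin n, DS15.dg G v = 2 * G.edgeSet.ncard := by
    have h1 : ∀ v, DS15.dg G v = G.degree v := by
      intro v
      rw [DS15.dg, ← SimpleGraph.card_neighborSet_eq_degree,
        Set.ncard_eq_toFinset_card', Set.toFinset_card]
    have h2 : G.edgeSet.ncard = G.edgeFinset.card := by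
      rw [← SimpleGraph.coe_edgeFinset, Set.ncard_coe_finset]
    simp_rw [h1]
    rw [h2]
    exact SimpleGraph.sum_degrees_eq_twice_card_edges G
  have hcast : ∑ v : Fin n, (DS15.dg G v : ℝ) = 2 * (G.edgeSet.ncard : ℝ) := by
    exact_mod_cast hhs
  linarith [hmain]
end
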